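/- arXiv:2212.12167 — 4 statements merged into one kernel-verified Lean document; each statement's English description precedes it below -/
import Mathlib

section
/- First intermediate identity in the proof of Lemma 6: under the outcome model, the treatment model, IV independence, and the orthogonality conditions (Assumption 2(c), unconditional form), it holds that E[B·(B − E[B])·(A − E[A|B])·Y] = E[B·(B − E[B])·(A − E[A|B])·A]·E[ϑ_a(V)] + E[B·(B − E[B])·(A − E[A|B])·A]·E[ϑ_az(V)] + E[B·(B − E[B])]·Cov(α_u(V), ϑ_u(V)). -/
open MeasureTheory ProbabilityTheory

set_option maxHeartbeats 1000000

/-- Covariance of two real random variables: `Cov(X,Z) = E[XZ] - E[X]·E[Z]`. -/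
noncomputable def covE {Ω : Type*} [MeasurableSpace Ω] (μ : Measure Ω) (X Z : Ω → ℝ) : ℝ :=
  (∫ ω, X ω * Z ω ∂μ) - (∫ ω, X ω ∂μ) * (∫ ω, Z ω ∂μ)

section Helpers

variable {Ω : Type*} [MeasurableSpace Ω] {μ : Measure Ω} [IsProbabilityMeasure μ]

lemma intBdd {f : Ω → ℝ} (hf : AEStronglyMeasurable f μ) {C : ℝ} (h : ∀ ω, |f ω| ≤ C) :
    Integrable f μ :=
  (integrable_const C).mono' hf (Filter.Eventually.of_forall fun ω => by
    simpa [Real.norm_eq_abs] using h ω)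

end Helpers

lemma towerEq {Ω : Type*} {m m0 : MeasurableSpace Ω} (hm : m ≤ m0) {μ : Measure Ω}
    [IsProbabilityMeasure μ] {W f g : Ω → ℝ}
    (hW : StronglyMeasurable[m] W) (hWb : ∃ C, ∀ ω, |W ω| ≤ C)
    (hf : Integrable f μ)
    (hg : μ[f|m] =ᵐ[μ] g) :
    ∫ ω, W ω * f ω ∂μ = ∫ ω, W ω * g ω ∂μ := by
  have hWae : AEStronglyMeasurable W μ :=
    StronglyMeasurable.aestronglyMeasurable (hW.mono hm) (μ := μ)
  have hWb' : ∃ C, ∀ ω, ‖W ω‖ ≤ C := by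
    obtain ⟨C, hC⟩ := hWb; exact ⟨C, fun ω => by simpa [Real.norm_eq_abs] using hC ω⟩
  have hWf : Integrable (fun ω => W ω * f ω) μ := hf.bdd_mul (c := hWb'.choose) hWae (Filter.Eventually.of_forall hWb'.choose_spec)
  have h2 := condExp_mul_of_stronglyMeasurable_left (μ := μ) hW (show Integrable (W * f) μ from hWf) hf
  calc ∫ ω, W ω * f ω ∂μ = ∫ ω, (W * f) ω ∂μ := rfl
    _ = ∫ ω, (μ[W * f|m]) ω ∂μ := (integral_condExp hm).symm
    _ = ∫ ω, (W * μ[f|m]) ω ∂μ := integral_congr_ae h2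
    _ = ∫ ω, W ω * g ω ∂μ := integral_congr_ae (hg.mono fun ω hω => by
          simp only [Pi.mul_apply, hω])

section Helpers2
variable {Ω : Type*} [MeasurableSpace Ω]

lemma integral_lincomb6 {ν : Measure Ω} (c₁ c₂ c₃ c₄ c₅ c₆ : ℝ) {f₁ f₂ f₃ f₄ f₅ f₆ : Ω → ℝ}
    (h₁ : Integrable f₁ ν) (h₂ : Integrable f₂ ν) (h₃ : Integrable f₃ ν)
    (h₄ : Integrable f₄ ν) (h₅ : Integrable f₅ ν) (h₆ : Integrable f₆ ν) :
    ∫ ω, (c₁ * f₁ ω + c₂ * f₂ ω + c₃ * f₃ ω + c₄ * f₄ ω + c₅ * f₅ ω + c₆ * f₆ ω) ∂ν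
      = c₁ * (∫ ω, f₁ ω ∂ν) + c₂ * (∫ ω, f₂ ω ∂ν) + c₃ * (∫ ω, f₃ ω ∂ν)
        + c₄ * (∫ ω, f₄ ω ∂ν) + c₅ * (∫ ω, f₅ ω ∂ν) + c₆ * (∫ ω, f₆ ω ∂ν) := by
  have H1 : Integrable (fun ω => c₁ * f₁ ω) ν := h₁.const_mul c₁
  have H2 : Integrable (fun ω => c₂ * f₂ ω) ν := h₂.const_mul c₂
  have H3 : Integrable (fun ω => c₃ * f₃ ω) ν := h₃.const_mul c₃
  have H4 : Integrable (fun ω => c₄ * f₄ ω) ν := h₄.const_mul c₄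
  have H5 : Integrable (fun ω => c₅ * f₅ ω) ν := h₅.const_mul c₅
  have H6 : Integrable (fun ω => c₆ * f₆ ω) ν := h₆.const_mul c₆
  have H12 : Integrable (fun ω => c₁ * f₁ ω + c₂ * f₂ ω) ν := H1.add H2
  have H13 : Integrable (fun ω => c₁ * f₁ ω + c₂ * f₂ ω + c₃ * f₃ ω) ν := H12.add H3
  have H14 : Integrable (fun ω => c₁ * f₁ ω + c₂ * f₂ ω + c₃ * f₃ ω + c₄ * f₄ ω) ν := H13.add H4
  have H15 : Integrable
      (fun ω => c₁ * f₁ ω + c₂ * f₂ ω + c₃ * f₃ ω + c₄ * f₄ ω + c₅ * f₅ ω) ν := H14.add H5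
  rw [integral_add H15 H6, integral_add H14 H5, integral_add H13 H4, integral_add H12 H3,
      integral_add H1 H2, integral_const_mul, integral_const_mul, integral_const_mul,
      integral_const_mul, integral_const_mul, integral_const_mul]

end Helpers2

/-- First intermediate identity in the proof of Lemma 6:
`E[B·(B − E[B])·(A − E[A|B])·Y]
  = E[B·(B − E[B])·(A − E[A|B])·A]·E[ϑ_a(V)] + E[B·(B − E[B])·(A − E[A|B])·A]·E[ϑ_az(V)]
    + E[B·(B − E[B])]·Cov(α_u(V), ϑ_u(V))`. -/
theorem lemma6_first_intermediate_identity
    {Ω 𝒱 : Type*} [MeasurableSpace Ω] [MeasurableSpace 𝒱]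
    (μ : Measure Ω) [IsProbabilityMeasure μ]
    (V : Ω → 𝒱) (A B : Ω → ℝ)
    (hV : Measurable V) (hA : Measurable A) (hB : Measurable B)
    (hA01 : ∀ ω, A ω = 0 ∨ A ω = 1) (hB01 : ∀ ω, B ω = 0 ∨ B ω = 1)
    (αz αu : 𝒱 → ℝ) (hαzm : Measurable αz) (hαum : Measurable αu)
    (hαzb : ∃ C, ∀ x, |αz x| ≤ C) (hαub : ∃ C, ∀ x, |αu x| ≤ C)
    (htreat : μ[A | MeasurableSpace.comap (fun ω => (B ω, V ω)) inferInstance]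
        =ᵐ[μ] fun ω => αz (V ω) * B ω + αu (V ω))
    (hindep : IndepFun B V μ)
    (Y : Ω → ℝ) (hY : Integrable Y μ)
    (ϑa ϑz ϑaz ϑu : 𝒱 → ℝ)
    (hϑam : Measurable ϑa) (hϑzm : Measurable ϑz)
    (hϑazm : Measurable ϑaz) (hϑum : Measurable ϑu)
    (hϑab : ∃ C, ∀ x, |ϑa x| ≤ C) (hϑzb : ∃ C, ∀ x, |ϑz x| ≤ C)
    (hϑazb : ∃ C, ∀ x, |ϑaz x| ≤ C) (hϑub : ∃ C, ∀ x, |ϑu x| ≤ C)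
    (houtcome : μ[Y | MeasurableSpace.comap (fun ω => (V ω, A ω, B ω)) inferInstance]
        =ᵐ[μ] fun ω => ϑa (V ω) * A ω + ϑz (V ω) * B ω + ϑaz (V ω) * A ω * B ω + ϑu (V ω))
    (horth1 : covE μ (fun x => ϑa (V x)) (fun x => αz (V x)) = 0)
    (horth2 : covE μ (fun x => ϑa (V x)) (fun x => αu (V x)) = 0)
    (horth3 : covE μ (fun x => ϑz (V x)) (fun x => αz (V x)) = 0)
    (horth4 : covE μ (fun x => ϑz (V x)) (fun x => αu (V x)) = 0)
    (horth5 : covE μ (fun x => ϑaz (V x)) (fun x => αz (V x)) = 0)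
    (horth6 : covE μ (fun x => ϑaz (V x)) (fun x => αu (V x)) = 0)
    (horth7 : covE μ (fun x => αz (V x)) (fun x => ϑu (V x)) = 0)
    :
    (∫ ω, B ω * (B ω - ∫ x, B x ∂μ)
        * (A ω - (μ[A | MeasurableSpace.comap B inferInstance]) ω) * Y ω ∂μ)
      = (∫ ω, B ω * (B ω - ∫ x, B x ∂μ)
            * (A ω - (μ[A | MeasurableSpace.comap B inferInstance]) ω) * A ω ∂μ)
          * (∫ ω, ϑa (V ω) ∂μ)
        + (∫ ω, B ω * (B ω - ∫ x, B x ∂μ)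
            * (A ω - (μ[A | MeasurableSpace.comap B inferInstance]) ω) * A ω ∂μ)
          * (∫ ω, ϑaz (V ω) ∂μ)
        + (∫ ω, B ω * (B ω - ∫ x, B x ∂μ) ∂μ)
          * covE μ (fun x => αu (V x)) (fun x => ϑu (V x)) := by
  classical
  obtain ⟨Cαz, hCαz⟩ := hαzb
  obtain ⟨Cαu, hCαu⟩ := hαub
  have hAb : ∀ ω, |A ω| ≤ 1 := fun ω => by rcases hA01 ω with h | h <;> simp [h]
  have hBb : ∀ ω, |B ω| ≤ 1 := fun ω => by rcases hB01 ω with h | h <;> simp [h]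
  set b : ℝ := ∫ x, B x ∂μ with hbdef
  set caz : ℝ := ∫ ω, αz (V ω) ∂μ with hcazdef
  set cau : ℝ := ∫ ω, αu (V ω) ∂μ with hcaudef
  set ea : ℝ := ∫ ω, ϑa (V ω) ∂μ with headef
  set ez : ℝ := ∫ ω, ϑz (V ω) ∂μ with hezdef
  set eaz : ℝ := ∫ ω, ϑaz (V ω) ∂μ with heazdef
  set eu : ℝ := ∫ ω, ϑu (V ω) ∂μ with heudef
  clear_value b caz cau ea ez eaz eu
  -- basic integrability
  have intB : Integrable B μ := intBdd hB.aestronglyMeasurable hBb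
  have intA : Integrable A μ := intBdd hA.aestronglyMeasurable hAb
  have intV : ∀ (h : 𝒱 → ℝ), Measurable h → ∀ (C : ℝ), (∀ x, |h x| ≤ C) →
      Integrable (fun ω => h (V ω)) μ := fun h hm C hC =>
    intBdd (hm.comp hV).aestronglyMeasurable (fun ω => hC _)
  have intBV : ∀ (h : 𝒱 → ℝ), Measurable h → ∀ (C : ℝ), (∀ x, |h x| ≤ C) →
      Integrable (fun ω => B ω * h (V ω)) μ := by
    intro h hm C hC
    refine intBdd ((hB.mul (hm.comp hV)).aestronglyMeasurable) (C := C) (fun ω => ?_)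
    have h1 := hBb ω; have h2 := hC (V ω)
    have h3 := abs_nonneg (B ω); have h4 := abs_nonneg (h (V ω))
    rw [abs_mul]; nlinarith
  have intBVA : ∀ (h : 𝒱 → ℝ), Measurable h → ∀ (C : ℝ), (∀ x, |h x| ≤ C) →
      Integrable (fun ω => B ω * h (V ω) * A ω) μ := by
    intro h hm C hC
    refine intBdd (((hB.mul (hm.comp hV)).mul hA).aestronglyMeasurable) (C := C) (fun ω => ?_)
    have h1 := hBb ω; have h2 := hC (V ω); have h5 := hAb ω
    have h3 := abs_nonneg (B ω); have h4 := abs_nonneg (h (V ω))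
    rw [abs_mul, abs_mul]
    have k1 : |B ω| * |h (V ω)| * |A ω| ≤ |B ω| * |h (V ω)| :=
      mul_le_of_le_one_right (mul_nonneg h3 h4) h5
    have k2 : |B ω| * |h (V ω)| ≤ 1 * C := mul_le_mul h1 h2 h4 zero_le_one
    linarith
  -- product of independent variables
  have P1 : ∀ (h : 𝒱 → ℝ), Measurable h → ∀ (C : ℝ), (∀ x, |h x| ≤ C) →
      ∫ ω, B ω * h (V ω) ∂μ = b * ∫ ω, h (V ω) ∂μ := by
    intro h hm C hC
    have hi : IndepFun B (fun ω => h (V ω)) μ := hindep.comp measurable_id hm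
    have := hi.integral_mul_eq_mul_integral intB.aestronglyMeasurable (intV h hm C hC).aestronglyMeasurable
    have heq : (B * fun ω => h (V ω)) = fun ω => B ω * h (V ω) := rfl
    rw [heq] at this
    rw [hbdef]
    exact this
  -- tower over σ(B,V)
  have hm2 : MeasurableSpace.comap (fun ω => (B ω, V ω)) inferInstance
      ≤ ‹MeasurableSpace Ω› := measurable_iff_comap_le.mp (hB.prodMk hV)
  have hφ : Measurable[MeasurableSpace.comap (fun ω => (B ω, V ω)) inferInstance]
      (fun ω => (B ω, V ω)) := measurable_iff_comap_le.mpr le_rfl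
  have P2 : ∀ (h : 𝒱 → ℝ), Measurable h → ∀ (C : ℝ), (∀ x, |h x| ≤ C) →
      ∫ ω, B ω * h (V ω) * A ω ∂μ
        = b * ∫ ω, (αz (V ω) + αu (V ω)) * h (V ω) ∂μ := by
    intro h hm C hC
    have hWm : StronglyMeasurable[MeasurableSpace.comap (fun ω => (B ω, V ω)) inferInstance]
        (fun ω => B ω * h (V ω)) :=
      ((measurable_fst.comp hφ).mul (hm.comp (measurable_snd.comp hφ))).stronglyMeasurable
    have hWb : ∃ C', ∀ ω, |B ω * h (V ω)| ≤ C' := by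
      refine ⟨C, fun ω => ?_⟩
      have h1 := hBb ω; have h2 := hC (V ω)
      have h3 := abs_nonneg (B ω); have h4 := abs_nonneg (h (V ω))
      rw [abs_mul]; nlinarith
    have t := towerEq hm2 hWm hWb intA htreat
    rw [t]
    have hpt : ∀ ω, B ω * h (V ω) * (αz (V ω) * B ω + αu (V ω))
        = B ω * ((αz (V ω) + αu (V ω)) * h (V ω)) := fun ω => by
      rcases hB01 ω with h0 | h0 <;> simp [h0] <;> ring
    rw [integral_congr_ae (Filter.Eventually.of_forall hpt)]
    exact P1 _ ((hαzm.add hαum).mul hm) ((Cαz + Cαu) * C) (fun x => by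
      have h1 := hCαz x; have h2 := hCαu x; have h3 := hC x
      have h4 := abs_nonneg (αz x); have h5 := abs_nonneg (αu x)
      have h6 := abs_nonneg (h x)
      have htri : |αz x + αu x| ≤ |αz x| + |αu x| := abs_add_le _ _
      rw [show ((αz + αu) * h) x = (αz x + αu x) * h x from rfl, abs_mul]; nlinarith)
  -- explicit form of E[A | B]
  have hg : μ[A|MeasurableSpace.comap B inferInstance] =ᵐ[μ] fun ω => caz * B ω + cau := by
    have hB2 : MeasurableSpace.comap B inferInstance ≤ MeasurableSpace.comap (fun ω => (B ω, V ω)) inferInstance :=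
      measurable_iff_comap_le.mp (measurable_fst.comp hφ)
    have hmB : MeasurableSpace.comap B inferInstance ≤ ‹MeasurableSpace Ω› := hB2.trans hm2
    have hBmB : Measurable[MeasurableSpace.comap B inferInstance] B := measurable_iff_comap_le.mpr le_rfl
    have intαzB : Integrable (fun ω => B ω * αz (V ω)) μ := intBV αz hαzm Cαz hCαz
    have intαu : Integrable (fun ω => αu (V ω)) μ := intV αu hαum Cαu hCαu
    have e1 : μ[A|MeasurableSpace.comap B inferInstance] =ᵐ[μ] μ[fun ω => B ω * αz (V ω) + αu (V ω)|MeasurableSpace.comap B inferInstance] := by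
      refine (condExp_condExp_of_le hB2 hm2).symm.trans ?_
      refine (condExp_congr_ae htreat).trans ?_
      exact condExp_congr_ae (Filter.Eventually.of_forall (fun ω => by ring))
    have e2 : μ[fun ω => B ω * αz (V ω) + αu (V ω)|MeasurableSpace.comap B inferInstance]
        =ᵐ[μ] μ[fun ω => B ω * αz (V ω)|MeasurableSpace.comap B inferInstance] + μ[fun ω => αu (V ω)|MeasurableSpace.comap B inferInstance] :=
      condExp_add intαzB intαu _
    have e3 : μ[fun ω => B ω * αz (V ω)|MeasurableSpace.comap B inferInstance] =ᵐ[μ] B * μ[fun ω => αz (V ω)|MeasurableSpace.comap B inferInstance] :=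
      condExp_mul_of_stronglyMeasurable_left hBmB.stronglyMeasurable intαzB
        (intV αz hαzm Cαz hCαz)
    have hIND : Indep (MeasurableSpace.comap V inferInstance) (MeasurableSpace.comap B inferInstance) μ :=
      ((IndepFun_iff_Indep B V μ).mp hindep).symm
    have hVc : Measurable[MeasurableSpace.comap V inferInstance] V :=
      measurable_iff_comap_le.mpr le_rfl
    have e4 : μ[fun ω => αz (V ω)|MeasurableSpace.comap B inferInstance] =ᵐ[μ] fun _ => caz := by
      have := condExp_indep_eq (measurable_iff_comap_le.mp hV) hmB
        ((hαzm.comp hVc).stronglyMeasurable) hIND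
      rw [hcazdef]
      exact this
    have e5 : μ[fun ω => αu (V ω)|MeasurableSpace.comap B inferInstance] =ᵐ[μ] fun _ => cau := by
      have := condExp_indep_eq (measurable_iff_comap_le.mp hV) hmB
        ((hαum.comp hVc).stronglyMeasurable) hIND
      rw [hcaudef]
      exact this
    filter_upwards [e1, e2, e3, e4, e5] with ω h1 h2 h3 h4 h5
    rw [h1, h2, Pi.add_apply, h3, Pi.mul_apply, h4, h5]
    ring
  -- moment identities from orthogonality
  have momgen : ∀ (p q : 𝒱 → ℝ), covE μ (fun x => p (V x)) (fun x => q (V x)) = 0 →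
      ∫ ω, q (V ω) * p (V ω) ∂μ
        = (∫ ω, q (V ω) ∂μ) * (∫ ω, p (V ω) ∂μ) := by
    intro p q h
    simp only [covE] at h
    have hcomm : ∫ ω, q (V ω) * p (V ω) ∂μ = ∫ ω, p (V ω) * q (V ω) ∂μ :=
      integral_congr_ae (Filter.Eventually.of_forall fun ω => mul_comm _ _)
    rw [hcomm]
    linear_combination h
  have mza : ∫ ω, αz (V ω) * ϑa (V ω) ∂μ = caz * ea := by
    rw [momgen ϑa αz horth1, ← hcazdef, ← headef]
  have mua : ∫ ω, αu (V ω) * ϑa (V ω) ∂μ = cau * ea := by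
    rw [momgen ϑa αu horth2, ← hcaudef, ← headef]
  have mzz : ∫ ω, αz (V ω) * ϑz (V ω) ∂μ = caz * ez := by
    rw [momgen ϑz αz horth3, ← hcazdef, ← hezdef]
  have muz : ∫ ω, αu (V ω) * ϑz (V ω) ∂μ = cau * ez := by
    rw [momgen ϑz αu horth4, ← hcaudef, ← hezdef]
  have mzaz : ∫ ω, αz (V ω) * ϑaz (V ω) ∂μ = caz * eaz := by
    rw [momgen ϑaz αz horth5, ← hcazdef, ← heazdef]
  have muaz : ∫ ω, αu (V ω) * ϑaz (V ω) ∂μ = cau * eaz := by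
    rw [momgen ϑaz αu horth6, ← hcaudef, ← heazdef]
  have mzu : ∫ ω, αz (V ω) * ϑu (V ω) ∂μ = caz * eu := by
    have h := horth7
    simp only [covE] at h
    rw [← hcazdef, ← heudef] at h
    linarith
  -- splitting (αz + αu) * h integrals
  have PAU : ∀ (h : 𝒱 → ℝ), Measurable h → ∀ (C : ℝ), (∀ x, |h x| ≤ C) →
      ∫ ω, (αz (V ω) + αu (V ω)) * h (V ω) ∂μ
        = (∫ ω, αz (V ω) * h (V ω) ∂μ) + ∫ ω, αu (V ω) * h (V ω) ∂μ := by
    intro h hm C hC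
    have e : ∀ ω, (αz (V ω) + αu (V ω)) * h (V ω)
        = αz (V ω) * h (V ω) + αu (V ω) * h (V ω) := fun ω => add_mul _ _ _
    rw [integral_congr_ae (Filter.Eventually.of_forall e)]
    have i1 : Integrable (fun ω => αz (V ω) * h (V ω)) μ := by
      refine intBdd ((hαzm.comp hV).mul (hm.comp hV)).aestronglyMeasurable
        (C := Cαz * C) (fun ω => ?_)
      have h1 := hCαz (V ω); have h2 := hC (V ω)
      have h3 := abs_nonneg (αz (V ω)); have h4 := abs_nonneg (h (V ω))
      rw [abs_mul]; nlinarith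
    have i2 : Integrable (fun ω => αu (V ω) * h (V ω)) μ := by
      refine intBdd ((hαum.comp hV).mul (hm.comp hV)).aestronglyMeasurable
        (C := Cαu * C) (fun ω => ?_)
      have h1 := hCαu (V ω); have h2 := hC (V ω)
      have h3 := abs_nonneg (αu (V ω)); have h4 := abs_nonneg (h (V ω))
      rw [abs_mul]; nlinarith
    exact integral_add i1 i2
  -- the six atom integrals
  obtain ⟨Ca, hCa⟩ := hϑab
  obtain ⟨Cz, hCz⟩ := hϑzb
  obtain ⟨Caz2, hCaz2⟩ := hϑazb
  obtain ⟨Cu, hCu⟩ := hϑub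
  have If1 : ∫ ω, B ω * ϑa (V ω) * A ω ∂μ = b * (caz * ea + cau * ea) := by
    rw [P2 ϑa hϑam Ca hCa, PAU ϑa hϑam Ca hCa, mza, mua]
  have If2 : ∫ ω, B ω * ϑz (V ω) * A ω ∂μ = b * (caz * ez + cau * ez) := by
    rw [P2 ϑz hϑzm Cz hCz, PAU ϑz hϑzm Cz hCz, mzz, muz]
  have If3 : ∫ ω, B ω * ϑz (V ω) ∂μ = b * ez := by
    rw [P1 ϑz hϑzm Cz hCz, ← hezdef]
  have If4 : ∫ ω, B ω * ϑaz (V ω) * A ω ∂μ = b * (caz * eaz + cau * eaz) := by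
    rw [P2 ϑaz hϑazm Caz2 hCaz2, PAU ϑaz hϑazm Caz2 hCaz2, mzaz, muaz]
  have If5 : ∫ ω, B ω * ϑu (V ω) * A ω ∂μ
      = b * (caz * eu + ∫ ω, αu (V ω) * ϑu (V ω) ∂μ) := by
    rw [P2 ϑu hϑum Cu hCu, PAU ϑu hϑum Cu hCu, mzu]
  have If6 : ∫ ω, B ω * ϑu (V ω) ∂μ = b * eu := by
    rw [P1 ϑu hϑum Cu hCu, ← heudef]
  -- the W function and its properties
  set W : Ω → ℝ := fun ω => B ω * (B ω - b) * (A ω - (caz * B ω + cau)) with hWdef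
  have hWb : ∃ C, ∀ ω, |W ω| ≤ C := by
    refine ⟨(1 + |b|) * (1 + (|caz| + |cau|)), fun ω => ?_⟩
    have h1 := hBb ω; have h2 := hAb ω
    have h3 : |B ω - b| ≤ 1 + |b| := (abs_sub _ _).trans (by linarith)
    have h4 : |A ω - (caz * B ω + cau)| ≤ 1 + (|caz| + |cau|) := by
      refine (abs_sub _ _).trans ?_
      have h5 : |caz * B ω + cau| ≤ |caz| + |cau| := by
        refine (abs_add_le _ _).trans ?_
        have := abs_nonneg caz
        rw [abs_mul]; nlinarith
      linarith
    have h6 := abs_nonneg (B ω); have h7 := abs_nonneg (B ω - b)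
    have h8 := abs_nonneg (A ω - (caz * B ω + cau))
    have h9 := abs_nonneg b; have h10 := abs_nonneg caz; have h11 := abs_nonneg cau
    rw [hWdef]; simp only []
    rw [abs_mul, abs_mul]
    have k2 : |B ω| * |B ω - b| ≤ 1 * (1 + |b|) := mul_le_mul h1 h3 h7 zero_le_one
    have k1 : |B ω| * |B ω - b| * |A ω - (caz * B ω + cau)| ≤ (1 * (1 + |b|)) * (1 + (|caz| + |cau|)) :=
      mul_le_mul k2 h4 h8 (by positivity)
    linarith
  -- replace the conditional expectation by its explicit form in the goal
  have EL1 : (∫ ω, B ω * (B ω - b) * (A ω - (μ[A|MeasurableSpace.comap B inferInstance]) ω) * Y ω ∂μ)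
      = ∫ ω, W ω * Y ω ∂μ :=
    integral_congr_ae (hg.mono fun ω hω => by rw [hWdef]; simp only []; rw [hω])
  have EA1 : (∫ ω, B ω * (B ω - b) * (A ω - (μ[A|MeasurableSpace.comap B inferInstance]) ω) * A ω ∂μ)
      = ∫ ω, W ω * A ω ∂μ :=
    integral_congr_ae (hg.mono fun ω hω => by rw [hWdef]; simp only []; rw [hω])
  -- tower over σ(V,A,B) for the outcome model
  have hm3 : MeasurableSpace.comap (fun ω => (V ω, A ω, B ω)) inferInstance
      ≤ ‹MeasurableSpace Ω› := measurable_iff_comap_le.mp (hV.prodMk (hA.prodMk hB))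
  have hψ : Measurable[MeasurableSpace.comap (fun ω => (V ω, A ω, B ω)) inferInstance]
      (fun ω => (V ω, A ω, B ω)) := measurable_iff_comap_le.mpr le_rfl
  have hA3 : Measurable[MeasurableSpace.comap (fun ω => (V ω, A ω, B ω)) inferInstance] A :=
    measurable_fst.comp (measurable_snd.comp hψ)
  have hB3 : Measurable[MeasurableSpace.comap (fun ω => (V ω, A ω, B ω)) inferInstance] B :=
    measurable_snd.comp (measurable_snd.comp hψ)
  have hWm3 : StronglyMeasurable[MeasurableSpace.comap
      (fun ω => (V ω, A ω, B ω)) inferInstance] W := by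
    rw [hWdef]
    exact ((hB3.mul (hB3.sub measurable_const)).mul
      (hA3.sub ((measurable_const.mul hB3).add measurable_const))).stronglyMeasurable
  have EL2 : ∫ ω, W ω * Y ω ∂μ
      = ∫ ω, W ω * (ϑa (V ω) * A ω + ϑz (V ω) * B ω + ϑaz (V ω) * A ω * B ω + ϑu (V ω)) ∂μ :=
    towerEq hm3 hWm3 hWb hY houtcome
  -- pointwise decomposition of the integrand
  have EL3 : ∫ ω, W ω * (ϑa (V ω) * A ω + ϑz (V ω) * B ω
        + ϑaz (V ω) * A ω * B ω + ϑu (V ω)) ∂μ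
      = ∫ ω, ((1 - b) * (1 - (caz + cau)) * (B ω * ϑa (V ω) * A ω)
          + (1 - b) * (B ω * ϑz (V ω) * A ω)
          + (-((1 - b) * (caz + cau))) * (B ω * ϑz (V ω))
          + (1 - b) * (1 - (caz + cau)) * (B ω * ϑaz (V ω) * A ω)
          + (1 - b) * (B ω * ϑu (V ω) * A ω)
          + (-((1 - b) * (caz + cau))) * (B ω * ϑu (V ω))) ∂μ := by
    refine integral_congr_ae (Filter.Eventually.of_forall fun ω => ?_)
    rw [hWdef]; simp only []
    rcases hA01 ω with h | h <;> rcases hB01 ω with h' | h' <;> rw [h, h'] <;> ring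
  have EL4 := integral_lincomb6 (ν := μ)
    ((1 - b) * (1 - (caz + cau))) (1 - b) (-((1 - b) * (caz + cau)))
    ((1 - b) * (1 - (caz + cau))) (1 - b) (-((1 - b) * (caz + cau)))
    (intBVA ϑa hϑam Ca hCa) (intBVA ϑz hϑzm Cz hCz) (intBV ϑz hϑzm Cz hCz)
    (intBVA ϑaz hϑazm Caz2 hCaz2) (intBVA ϑu hϑum Cu hCu) (intBV ϑu hϑum Cu hCu)
  -- the E[W A] term
  have EA2 : ∫ ω, W ω * A ω ∂μ
      = (1 - b) * (1 - (caz + cau)) * ∫ ω, B ω * A ω ∂μ := by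
    have e : ∀ ω, W ω * A ω = (1 - b) * (1 - (caz + cau)) * (B ω * A ω) := fun ω => by
      rw [hWdef]; simp only []
      rcases hA01 ω with h | h <;> rcases hB01 ω with h' | h' <;> rw [h, h'] <;> ring
    rw [integral_congr_ae (Filter.Eventually.of_forall e), integral_const_mul]
  have hBA : ∫ ω, B ω * A ω ∂μ = b * (caz + cau) := by
    have e : ∀ ω, B ω * A ω = B ω * (fun _ : 𝒱 => (1:ℝ)) (V ω) * A ω := fun ω => by simp
    rw [integral_congr_ae (Filter.Eventually.of_forall e),
        P2 (fun _ => 1) measurable_const 1 (fun x => by simp)]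
    have e2 : ∀ ω, (αz (V ω) + αu (V ω)) * (fun _ : 𝒱 => (1:ℝ)) (V ω)
        = αz (V ω) + αu (V ω) := fun ω => by simp
    rw [integral_congr_ae (Filter.Eventually.of_forall e2),
        integral_add (intV αz hαzm Cαz hCαz) (intV αu hαum Cαu hCαu),
        ← hcazdef, ← hcaudef]
  -- the E[B (B - b)] term
  have EB : ∫ ω, B ω * (B ω - b) ∂μ = b - b * b := by
    have e : ∀ ω, B ω * (B ω - b) = B ω + (-b) * B ω := fun ω => by
      rcases hB01 ω with h | h <;> rw [h] <;> ring
    rw [integral_congr_ae (Filter.Eventually.of_forall e),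
        integral_add intB (intB.const_mul (-b)), integral_const_mul, ← hbdef]
    ring
  -- covariance term
  have hcov : covE μ (fun x => αu (V x)) (fun x => ϑu (V x))
      = (∫ ω, αu (V ω) * ϑu (V ω) ∂μ) - cau * eu := by
    simp only [covE]
    rw [← hcaudef, ← heudef]
  -- put everything together
  rw [EL1, EA1, EL2, EL3, EL4, EA2, EB, hcov, If1, If2, If3, If4, If5, If6, hBA]
  ring
end

section
/- Second intermediate identity in the proof of Lemma 6: under the outcome model, the treatment model, IV independence, and the orthogonality conditions (Assumption 2(c), unconditional form), it holds that E[(A − E[A|B])·Y] = E[A·(A − E[A|B])]·E[ϑ_a(V)] + E[B·A·(A − E[A|B])]·E[ϑ_az(V)] + Cov(α_u(V), ϑ_u(V)). -/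
open MeasureTheory ProbabilityTheory

/-- Bounded measurable real function. -/
def BddMeas {Ω : Type*} [MeasurableSpace Ω] (f : Ω → ℝ) : Prop :=
  Measurable f ∧ ∃ C : ℝ, ∀ ω, |f ω| ≤ C

namespace BddMeas

variable {Ω : Type*} [MeasurableSpace Ω] {f g : Ω → ℝ}

lemma const (c : ℝ) : BddMeas (fun _ : Ω => c) := ⟨measurable_const, |c|, fun _ => le_rfl⟩

lemma add (hf : BddMeas f) (hg : BddMeas g) : BddMeas (fun ω => f ω + g ω) := by
  obtain ⟨Cf, hCf⟩ := hf.2; obtain ⟨Cg, hCg⟩ := hg.2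
  exact ⟨hf.1.add hg.1, Cf + Cg, fun ω => (abs_add_le _ _).trans (add_le_add (hCf ω) (hCg ω))⟩

lemma neg (hf : BddMeas f) : BddMeas (fun ω => -f ω) := by
  obtain ⟨Cf, hCf⟩ := hf.2
  exact ⟨hf.1.neg, Cf, fun ω => by rw [abs_neg]; exact hCf ω⟩

lemma sub (hf : BddMeas f) (hg : BddMeas g) : BddMeas (fun ω => f ω - g ω) := by
  simpa [sub_eq_add_neg] using hf.add hg.neg

lemma mul (hf : BddMeas f) (hg : BddMeas g) : BddMeas (fun ω => f ω * g ω) := by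
  obtain ⟨Cf, hCf⟩ := hf.2; obtain ⟨Cg, hCg⟩ := hg.2
  refine ⟨hf.1.mul hg.1, Cf * Cg, fun ω => ?_⟩
  rw [abs_mul]
  exact mul_le_mul (hCf ω) (hCg ω) (abs_nonneg _) ((abs_nonneg (f ω)).trans (hCf ω))

lemma integrable (hf : BddMeas f) (μ : Measure Ω) [IsFiniteMeasure μ] : Integrable f μ := by
  obtain ⟨C, hC⟩ := hf.2
  exact (integrable_const C).mono' hf.1.aestronglyMeasurable
    (Filter.Eventually.of_forall fun ω => by rw [Real.norm_eq_abs]; exact hC ω)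

end BddMeas

/-- Pull-out lemma at the level of integrals. -/
lemma integral_mul_condexp {Ω : Type*} {m m0 : MeasurableSpace Ω} (μ : @Measure Ω m0)
    [IsProbabilityMeasure μ] (hm : m ≤ m0) {g f h : Ω → ℝ}
    (hg : StronglyMeasurable[m] g)
    (hgf : Integrable (fun ω => g ω * f ω) μ) (hf : Integrable f μ)
    (hc : μ[f|m] =ᵐ[μ] h) :
    ∫ ω, g ω * f ω ∂μ = ∫ ω, g ω * h ω ∂μ := by
  have h1 : μ[g * f|m] =ᵐ[μ] g * μ[f|m] := condExp_mul_of_stronglyMeasurable_left hg hgf hf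
  calc ∫ ω, g ω * f ω ∂μ = ∫ ω, (μ[g * f|m]) ω ∂μ := (integral_condExp hm).symm
    _ = ∫ ω, g ω * h ω ∂μ := by
        refine integral_congr_ae ?_
        filter_upwards [h1, hc] with ω hω1 hω2
        simp only [Pi.mul_apply] at hω1
        rw [hω1, hω2]

lemma integral_add6 {Ω : Type*} [MeasurableSpace Ω] {μ : Measure Ω}
    {f1 f2 f3 f4 f5 f6 : Ω → ℝ} (h1 : Integrable f1 μ) (h2 : Integrable f2 μ)
    (h3 : Integrable f3 μ) (h4 : Integrable f4 μ) (h5 : Integrable f5 μ) (h6 : Integrable f6 μ) :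
    ∫ ω, (f1 ω + f2 ω + f3 ω + f4 ω + f5 ω + f6 ω) ∂μ
      = ∫ ω, f1 ω ∂μ + ∫ ω, f2 ω ∂μ + ∫ ω, f3 ω ∂μ + ∫ ω, f4 ω ∂μ + ∫ ω, f5 ω ∂μ
        + ∫ ω, f6 ω ∂μ := by
  have i12 : Integrable (fun ω => f1 ω + f2 ω) μ := h1.add h2
  have i13 : Integrable (fun ω => f1 ω + f2 ω + f3 ω) μ := i12.add h3
  have i14 : Integrable (fun ω => f1 ω + f2 ω + f3 ω + f4 ω) μ := i13.add h4
  have i15 : Integrable (fun ω => f1 ω + f2 ω + f3 ω + f4 ω + f5 ω) μ := i14.add h5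
  rw [integral_add i15 h6, integral_add i14 h5, integral_add i13 h4, integral_add i12 h3,
    integral_add h1 h2]

/-- Second intermediate identity in the proof of Lemma 6:
`E[(A − E[A|B])·Y] = E[A·(A − E[A|B])]·E[ϑ_a(V)] + E[B·A·(A − E[A|B])]·E[ϑ_az(V)]
  + Cov(α_u(V), ϑ_u(V))`. -/
theorem lemma6_second_intermediate_identity
    {Ω 𝒱 : Type*} [MeasurableSpace Ω] [MeasurableSpace 𝒱]
    (μ : Measure Ω) [IsProbabilityMeasure μ]
    (V : Ω → 𝒱) (A B : Ω → ℝ)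
    (hV : Measurable V) (hA : Measurable A) (hB : Measurable B)
    (hA01 : ∀ ω, A ω = 0 ∨ A ω = 1) (hB01 : ∀ ω, B ω = 0 ∨ B ω = 1)
    (αz αu : 𝒱 → ℝ) (hαzm : Measurable αz) (hαum : Measurable αu)
    (hαzb : ∃ C, ∀ x, |αz x| ≤ C) (hαub : ∃ C, ∀ x, |αu x| ≤ C)
    (htreat : μ[A | MeasurableSpace.comap (fun ω => (B ω, V ω)) inferInstance]
        =ᵐ[μ] fun ω => αz (V ω) * B ω + αu (V ω))
    (hindep : IndepFun B V μ)
    (Y : Ω → ℝ) (hY : Integrable Y μ)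
    (ϑa ϑz ϑaz ϑu : 𝒱 → ℝ)
    (hϑam : Measurable ϑa) (hϑzm : Measurable ϑz)
    (hϑazm : Measurable ϑaz) (hϑum : Measurable ϑu)
    (hϑab : ∃ C, ∀ x, |ϑa x| ≤ C) (hϑzb : ∃ C, ∀ x, |ϑz x| ≤ C)
    (hϑazb : ∃ C, ∀ x, |ϑaz x| ≤ C) (hϑub : ∃ C, ∀ x, |ϑu x| ≤ C)
    (houtcome : μ[Y | MeasurableSpace.comap (fun ω => (V ω, A ω, B ω)) inferInstance]
        =ᵐ[μ] fun ω => ϑa (V ω) * A ω + ϑz (V ω) * B ω + ϑaz (V ω) * A ω * B ω + ϑu (V ω))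
    (horth1 : covE μ (fun x => ϑa (V x)) (fun x => αz (V x)) = 0)
    (horth2 : covE μ (fun x => ϑa (V x)) (fun x => αu (V x)) = 0)
    (horth3 : covE μ (fun x => ϑz (V x)) (fun x => αz (V x)) = 0)
    (horth4 : covE μ (fun x => ϑz (V x)) (fun x => αu (V x)) = 0)
    (horth5 : covE μ (fun x => ϑaz (V x)) (fun x => αz (V x)) = 0)
    (horth6 : covE μ (fun x => ϑaz (V x)) (fun x => αu (V x)) = 0)
    (horth7 : covE μ (fun x => αz (V x)) (fun x => ϑu (V x)) = 0)
    :
    (∫ ω, (A ω - (μ[A | MeasurableSpace.comap B inferInstance]) ω) * Y ω ∂μ)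
      = (∫ ω, A ω * (A ω - (μ[A | MeasurableSpace.comap B inferInstance]) ω) ∂μ)
          * (∫ ω, ϑa (V ω) ∂μ)
        + (∫ ω, B ω * A ω * (A ω - (μ[A | MeasurableSpace.comap B inferInstance]) ω) ∂μ)
          * (∫ ω, ϑaz (V ω) ∂μ)
        + covE μ (fun x => αu (V x)) (fun x => ϑu (V x)) := by
  classical
  set a := ∫ ω, αz (V ω) ∂μ with ha
  set b := ∫ ω, αu (V ω) ∂μ with hb
  obtain ⟨Cαz, hCαz⟩ := hαzb
  obtain ⟨Cαu, hCαu⟩ := hαub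
  obtain ⟨Ca, hCa⟩ := hϑab
  obtain ⟨Czc, hCzc⟩ := hϑzb
  obtain ⟨Cazc, hCazc⟩ := hϑazb
  obtain ⟨Cu, hCu⟩ := hϑub
  have hA1 : ∀ ω, |A ω| ≤ 1 := fun ω => by rcases hA01 ω with h | h <;> rw [h] <;> norm_num
  have hB1 : ∀ ω, |B ω| ≤ 1 := fun ω => by rcases hB01 ω with h | h <;> rw [h] <;> norm_num
  have bA : BddMeas A := ⟨hA, 1, hA1⟩
  have bB : BddMeas B := ⟨hB, 1, hB1⟩
  have bz : BddMeas (fun ω => αz (V ω)) := ⟨hαzm.comp hV, Cαz, fun ω => hCαz _⟩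
  have bu : BddMeas (fun ω => αu (V ω)) := ⟨hαum.comp hV, Cαu, fun ω => hCαu _⟩
  have bta : BddMeas (fun ω => ϑa (V ω)) := ⟨hϑam.comp hV, Ca, fun ω => hCa _⟩
  have btz : BddMeas (fun ω => ϑz (V ω)) := ⟨hϑzm.comp hV, Czc, fun ω => hCzc _⟩
  have btaz : BddMeas (fun ω => ϑaz (V ω)) := ⟨hϑazm.comp hV, Cazc, fun ω => hCazc _⟩
  have btu : BddMeas (fun ω => ϑu (V ω)) := ⟨hϑum.comp hV, Cu, fun ω => hCu _⟩
  -- sub-σ-algebras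
  have hmBle : MeasurableSpace.comap B inferInstance ≤ ‹MeasurableSpace Ω› := hB.comap_le
  have hmBVle : MeasurableSpace.comap (fun ω => (B ω, V ω)) inferInstance
      ≤ ‹MeasurableSpace Ω› := (hB.prodMk hV).comap_le
  have hmVABle : MeasurableSpace.comap (fun ω => (V ω, A ω, B ω)) inferInstance
      ≤ ‹MeasurableSpace Ω› := (hV.prodMk (hA.prodMk hB)).comap_le
  have hBmB : Measurable[MeasurableSpace.comap B inferInstance] B := comap_measurable B
  have hPBV : Measurable[MeasurableSpace.comap (fun ω => (B ω, V ω)) inferInstance]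
      (fun ω => (B ω, V ω)) := comap_measurable _
  have hBBV : Measurable[MeasurableSpace.comap (fun ω => (B ω, V ω)) inferInstance] B :=
    measurable_fst.comp hPBV
  have hVBV : Measurable[MeasurableSpace.comap (fun ω => (B ω, V ω)) inferInstance] V :=
    measurable_snd.comp hPBV
  have hPVAB : Measurable[MeasurableSpace.comap (fun ω => (V ω, A ω, B ω)) inferInstance]
      (fun ω => (V ω, A ω, B ω)) := comap_measurable _
  have hAVAB : Measurable[MeasurableSpace.comap (fun ω => (V ω, A ω, B ω)) inferInstance] A :=
    (measurable_fst.comp measurable_snd).comp hPVAB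
  have hBVAB : Measurable[MeasurableSpace.comap (fun ω => (V ω, A ω, B ω)) inferInstance] B :=
    (measurable_snd.comp measurable_snd).comp hPVAB
  -- independence helpers
  have sep : ∀ (φ : ℝ → ℝ) (ψ : 𝒱 → ℝ), Measurable φ → Measurable ψ →
      ∫ ω, φ (B ω) * ψ (V ω) ∂μ = (∫ ω, φ (B ω) ∂μ) * ∫ ω, ψ (V ω) ∂μ := by
    intro φ ψ hφ hψ
    exact (hindep.comp hφ hψ).integral_mul_eq_mul_integral (hφ.comp hB).aestronglyMeasurable
      (hψ.comp hV).aestronglyMeasurable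
  have red : ∀ (ψ : 𝒱 → ℝ), Measurable ψ →
      ∫ ω, ψ (V ω) * B ω ∂μ = (∫ ω, ψ (V ω) ∂μ) * ∫ ω, B ω ∂μ := by
    intro ψ hψ
    exact (hindep.symm.comp hψ measurable_id).integral_mul_eq_mul_integral (hψ.comp hV).aestronglyMeasurable
      hB.aestronglyMeasurable
  -- treatment-model substitution
  have htreatInt : ∀ g : Ω → ℝ,
      Measurable[MeasurableSpace.comap (fun ω => (B ω, V ω)) inferInstance] g →
      (∃ C, ∀ ω, |g ω| ≤ C) →
      ∫ ω, g ω * A ω ∂μ = ∫ ω, g ω * (αz (V ω) * B ω + αu (V ω)) ∂μ := by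
    intro g hgm hgb
    refine integral_mul_condexp μ hmBVle hgm.stronglyMeasurable ?_ (bA.integrable μ) htreat
    exact (BddMeas.mul ⟨hgm.mono hmBVle le_rfl, hgb⟩ bA).integrable μ
  -- conditional expectation of A given B
  have bg_bdd : BddMeas (fun ω => a * B ω + b) := ((BddMeas.const a).mul bB).add (BddMeas.const b)
  have hmB : μ[A | MeasurableSpace.comap B inferInstance] =ᵐ[μ] fun ω => a * B ω + b := by
    refine (ae_eq_condExp_of_forall_setIntegral_eq hmBle (bA.integrable μ)
      (fun s _ _ => (bg_bdd.integrable μ).integrableOn)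
      (fun s hs _ => ?_)
      (((hBmB.const_mul a).add_const b).stronglyMeasurable.aestronglyMeasurable)).symm
    obtain ⟨t, ht, rfl⟩ := hs
    have hmp : MeasurableSet (B ⁻¹' t) := hB ht
    set χ : ℝ → ℝ := t.indicator (fun _ => (1 : ℝ)) with hχ
    have hχm : Measurable χ := measurable_const.indicator ht
    have hχb : ∀ x, |χ x| ≤ 1 := by
      intro x
      by_cases h : x ∈ t
      · simp [hχ, Set.indicator_of_mem h]
      · simp [hχ, Set.indicator_of_notMem h]
    have bχ : BddMeas (fun ω => χ (B ω)) := ⟨hχm.comp hB, 1, fun ω => hχb _⟩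
    have key : ∀ f : Ω → ℝ, ∫ x in B ⁻¹' t, f x ∂μ = ∫ ω, χ (B ω) * f ω ∂μ := by
      intro f
      rw [← integral_indicator hmp]
      refine integral_congr_ae (Filter.Eventually.of_forall fun ω => ?_)
      by_cases h : B ω ∈ t <;>
        simp [hχ, Set.indicator_apply, Set.mem_preimage, h]
    rw [key, key,
      htreatInt (fun ω => χ (B ω)) (hχm.comp hBBV) ⟨1, fun ω => hχb _⟩]
    have l1 : ∫ ω, χ (B ω) * (a * B ω + b) ∂μ
        = a * ∫ ω, χ (B ω) * B ω ∂μ + b * ∫ ω, χ (B ω) ∂μ := by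
      rw [show (fun ω => χ (B ω) * (a * B ω + b))
          = fun ω => a * (χ (B ω) * B ω) + b * χ (B ω) from funext fun ω => by ring]
      rw [integral_add (((bχ.mul bB).integrable μ).const_mul a)
        ((bχ.integrable μ).const_mul b), integral_const_mul, integral_const_mul]
    have l2 : ∫ ω, χ (B ω) * (αz (V ω) * B ω + αu (V ω)) ∂μ
        = (∫ ω, χ (B ω) * B ω ∂μ) * a + (∫ ω, χ (B ω) ∂μ) * b := by
      rw [show (fun ω => χ (B ω) * (αz (V ω) * B ω + αu (V ω)))
          = fun ω => χ (B ω) * B ω * αz (V ω) + χ (B ω) * αu (V ω) from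
          funext fun ω => by ring]
      rw [integral_add (((bχ.mul bB).mul bz).integrable μ) ((bχ.mul bu).integrable μ),
        sep (fun x => χ x * x) αz (hχm.mul measurable_id) hαzm, sep χ αu hχm hαum,
        ← ha, ← hb]
    rw [l1, l2]; ring
  -- key independence computation
  have gake : ∀ (θ : 𝒱 → ℝ), Measurable θ → (∃ C, ∀ x, |θ x| ≤ C) →
      ∀ (g : ℝ → ℝ), Measurable g → (∃ C, ∀ ω, |g (B ω)| ≤ C) →
      ∫ ω, θ (V ω) * (g (B ω) * A ω) ∂μ
        = (∫ ω, θ (V ω) * αz (V ω) ∂μ) * (∫ ω, g (B ω) * B ω ∂μ)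
          + (∫ ω, θ (V ω) * αu (V ω) ∂μ) * ∫ ω, g (B ω) ∂μ := by
    intro θ hθ hθb g hg hgb
    have bθ : BddMeas (fun ω => θ (V ω)) := ⟨hθ.comp hV, hθb.choose, fun ω => hθb.choose_spec _⟩
    have bg : BddMeas (fun ω => g (B ω)) := ⟨hg.comp hB, hgb⟩
    have step1 : ∫ ω, θ (V ω) * (g (B ω) * A ω) ∂μ = ∫ ω, θ (V ω) * g (B ω) * A ω ∂μ :=
      integral_congr_ae (Filter.Eventually.of_forall fun ω => by ring)
    rw [step1, htreatInt (fun ω => θ (V ω) * g (B ω)) ((hθ.comp hVBV).mul (hg.comp hBBV))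
      (bθ.mul bg).2]
    have step3 : ∫ ω, θ (V ω) * g (B ω) * (αz (V ω) * B ω + αu (V ω)) ∂μ
        = ∫ ω, (g (B ω) * B ω * (θ (V ω) * αz (V ω)) + g (B ω) * (θ (V ω) * αu (V ω))) ∂μ :=
      integral_congr_ae (Filter.Eventually.of_forall fun ω => by ring)
    rw [step3, integral_add (((bg.mul bB).mul (bθ.mul bz)).integrable μ)
      ((bg.mul (bθ.mul bu)).integrable μ),
      sep (fun x => g x * x) (fun v => θ v * αz v) (hg.mul measurable_id) (hθ.mul hαzm),
      sep g (fun v => θ v * αu v) hg (hθ.mul hαum)]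
    ring
  have keylem : ∀ (θ : 𝒱 → ℝ), Measurable θ → (∃ C, ∀ x, |θ x| ≤ C) →
      (∫ ω, θ (V ω) * αz (V ω) ∂μ = (∫ ω, θ (V ω) ∂μ) * a) →
      (∫ ω, θ (V ω) * αu (V ω) ∂μ = (∫ ω, θ (V ω) ∂μ) * b) →
      ∀ (g : ℝ → ℝ), Measurable g → (∃ C, ∀ ω, |g (B ω)| ≤ C) →
      ∫ ω, θ (V ω) * (g (B ω) * A ω) ∂μ
        = (∫ ω, θ (V ω) ∂μ) * ∫ ω, g (B ω) * A ω ∂μ := by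
    intro θ hθ hθb hz hu g hg hgb
    have h1 := gake θ hθ hθb g hg hgb
    have h2 := gake (fun _ => (1 : ℝ)) measurable_const ⟨1, fun _ => by norm_num⟩ g hg hgb
    simp only [one_mul] at h2
    rw [← ha, ← hb] at h2
    rw [h1, hz, hu, h2]; ring
  -- atoms from the orthogonality assumptions
  have Eaz : ∫ ω, ϑa (V ω) * αz (V ω) ∂μ = (∫ ω, ϑa (V ω) ∂μ) * a := by
    have h := horth1; simp only [covE] at h; rw [← ha] at h; linarith
  have Eau : ∫ ω, ϑa (V ω) * αu (V ω) ∂μ = (∫ ω, ϑa (V ω) ∂μ) * b := by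
    have h := horth2; simp only [covE] at h; rw [← hb] at h; linarith
  have Ezz : ∫ ω, ϑz (V ω) * αz (V ω) ∂μ = (∫ ω, ϑz (V ω) ∂μ) * a := by
    have h := horth3; simp only [covE] at h; rw [← ha] at h; linarith
  have Ezu : ∫ ω, ϑz (V ω) * αu (V ω) ∂μ = (∫ ω, ϑz (V ω) ∂μ) * b := by
    have h := horth4; simp only [covE] at h; rw [← hb] at h; linarith
  have Eazz : ∫ ω, ϑaz (V ω) * αz (V ω) ∂μ = (∫ ω, ϑaz (V ω) ∂μ) * a := by
    have h := horth5; simp only [covE] at h; rw [← ha] at h; linarith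
  have Eazu : ∫ ω, ϑaz (V ω) * αu (V ω) ∂μ = (∫ ω, ϑaz (V ω) ∂μ) * b := by
    have h := horth6; simp only [covE] at h; rw [← hb] at h; linarith
  have Euz : ∫ ω, ϑu (V ω) * αz (V ω) ∂μ = a * ∫ ω, ϑu (V ω) ∂μ := by
    have h := horth7; simp only [covE] at h; rw [← ha] at h
    have hc : ∫ ω, ϑu (V ω) * αz (V ω) ∂μ = ∫ ω, αz (V ω) * ϑu (V ω) ∂μ :=
      integral_congr_ae (Filter.Eventually.of_forall fun ω => mul_comm _ _)
    rw [hc]; linarith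
  have Ecov : covE μ (fun x => αu (V x)) (fun x => ϑu (V x))
      = (∫ ω, ϑu (V ω) * αu (V ω) ∂μ) - b * ∫ ω, ϑu (V ω) ∂μ := by
    simp only [covE]; rw [← hb]
    have hc : ∫ ω, αu (V ω) * ϑu (V ω) ∂μ = ∫ ω, ϑu (V ω) * αu (V ω) ∂μ :=
      integral_congr_ae (Filter.Eventually.of_forall fun ω => mul_comm _ _)
    rw [hc]
  -- rewrite the conditional expectation in the goal
  have e1 : (∫ ω, (A ω - (μ[A | MeasurableSpace.comap B inferInstance]) ω) * Y ω ∂μ)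
      = ∫ ω, (A ω - (a * B ω + b)) * Y ω ∂μ :=
    integral_congr_ae (by filter_upwards [hmB] with ω h; rw [h])
  have e2 : (∫ ω, A ω * (A ω - (μ[A | MeasurableSpace.comap B inferInstance]) ω) ∂μ)
      = ∫ ω, A ω * (A ω - (a * B ω + b)) ∂μ :=
    integral_congr_ae (by filter_upwards [hmB] with ω h; rw [h])
  have e3 : (∫ ω, B ω * A ω * (A ω - (μ[A | MeasurableSpace.comap B inferInstance]) ω) ∂μ)
      = ∫ ω, B ω * A ω * (A ω - (a * B ω + b)) ∂μ :=
    integral_congr_ae (by filter_upwards [hmB] with ω h; rw [h])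
  -- outcome-model substitution
  have bD : BddMeas (fun ω => A ω - (a * B ω + b)) := bA.sub bg_bdd
  have S0 : ∫ ω, (A ω - (a * B ω + b)) * Y ω ∂μ
      = ∫ ω, (A ω - (a * B ω + b))
          * (ϑa (V ω) * A ω + ϑz (V ω) * B ω + ϑaz (V ω) * A ω * B ω + ϑu (V ω)) ∂μ := by
    refine integral_mul_condexp μ hmVABle
      ((hAVAB.sub ((hBVAB.const_mul a).add_const b)).stronglyMeasurable) ?_ hY houtcome
    obtain ⟨C, hC⟩ := bD.2
    refine hY.bdd_mul (c := C) bD.1.aestronglyMeasurable ?_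
    exact Filter.Eventually.of_forall fun ω => by rw [Real.norm_eq_abs]; exact hC ω
  -- split into six pieces
  have bt1 : BddMeas (fun ω => ϑa (V ω) * ((1 - a * B ω - b) * A ω)) :=
    bta.mul ((((BddMeas.const 1).sub ((BddMeas.const a).mul bB)).sub (BddMeas.const b)).mul bA)
  have bt2a : BddMeas (fun ω => ϑz (V ω) * (B ω * A ω)) := btz.mul (bB.mul bA)
  have bt2b : BddMeas (fun ω => -((a + b) * (ϑz (V ω) * B ω))) :=
    ((BddMeas.const (a + b)).mul (btz.mul bB)).neg
  have bt3 : BddMeas (fun ω => ϑaz (V ω) * ((1 - a - b) * B ω * A ω)) :=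
    btaz.mul (((BddMeas.const (1 - a - b)).mul bB).mul bA)
  have bt4a : BddMeas (fun ω => ϑu (V ω) * (1 * A ω)) := btu.mul ((BddMeas.const 1).mul bA)
  have bt4b : BddMeas (fun ω => -(a * (ϑu (V ω) * B ω)) - b * ϑu (V ω)) :=
    (((BddMeas.const a).mul (btu.mul bB)).neg).sub ((BddMeas.const b).mul btu)
  have S1 : ∫ ω, (A ω - (a * B ω + b))
        * (ϑa (V ω) * A ω + ϑz (V ω) * B ω + ϑaz (V ω) * A ω * B ω + ϑu (V ω)) ∂μ
      = ∫ ω, ϑa (V ω) * ((1 - a * B ω - b) * A ω) ∂μ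
        + ∫ ω, ϑz (V ω) * (B ω * A ω) ∂μ
        + ∫ ω, -((a + b) * (ϑz (V ω) * B ω)) ∂μ
        + ∫ ω, ϑaz (V ω) * ((1 - a - b) * B ω * A ω) ∂μ
        + ∫ ω, ϑu (V ω) * (1 * A ω) ∂μ
        + ∫ ω, (-(a * (ϑu (V ω) * B ω)) - b * ϑu (V ω)) ∂μ := by
    rw [show (fun ω => (A ω - (a * B ω + b))
          * (ϑa (V ω) * A ω + ϑz (V ω) * B ω + ϑaz (V ω) * A ω * B ω + ϑu (V ω)))
        = fun ω => ϑa (V ω) * ((1 - a * B ω - b) * A ω)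
          + ϑz (V ω) * (B ω * A ω)
          + -((a + b) * (ϑz (V ω) * B ω))
          + ϑaz (V ω) * ((1 - a - b) * B ω * A ω)
          + ϑu (V ω) * (1 * A ω)
          + (-(a * (ϑu (V ω) * B ω)) - b * ϑu (V ω)) from
        funext fun ω => by
          rcases hA01 ω with h1 | h1 <;> rcases hB01 ω with h2 | h2 <;> rw [h1, h2] <;> ring]
    exact integral_add6 (bt1.integrable μ) (bt2a.integrable μ) (bt2b.integrable μ)
      (bt3.integrable μ) (bt4a.integrable μ) (bt4b.integrable μ)
  -- evaluate each piece
  have habs : ∀ (c d : ℝ) (ω : Ω), |c * B ω + d| ≤ |c| + |d| := by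
    intro c d ω
    rcases hB01 ω with h | h <;> rw [h]
    · simpa using le_add_of_nonneg_left (abs_nonneg c)
    · simpa using abs_add_le c d
  have hg1b : ∀ ω, |1 - a * B ω - b| ≤ |(-a)| + |1 - b| := fun ω => by
    rw [show (1 : ℝ) - a * B ω - b = (-a) * B ω + (1 - b) by ring]; exact habs _ _ ω
  have hg3b : ∀ ω, |(1 - a - b) * B ω| ≤ |1 - a - b| + |(0 : ℝ)| := fun ω => by
    rw [show (1 - a - b) * B ω = (1 - a - b) * B ω + 0 by ring]; exact habs _ _ ω
  have E1 : ∫ ω, ϑa (V ω) * ((1 - a * B ω - b) * A ω) ∂μ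
      = (∫ ω, ϑa (V ω) ∂μ) * ∫ ω, (1 - a * B ω - b) * A ω ∂μ :=
    keylem ϑa hϑam ⟨Ca, hCa⟩ Eaz Eau (fun x => 1 - a * x - b)
      ((measurable_const.sub (measurable_id.const_mul a)).sub measurable_const)
      ⟨|(-a)| + |1 - b|, hg1b⟩
  have E2a : ∫ ω, ϑz (V ω) * (B ω * A ω) ∂μ
      = (∫ ω, ϑz (V ω) ∂μ) * ∫ ω, B ω * A ω ∂μ :=
    keylem ϑz hϑzm ⟨Czc, hCzc⟩ Ezz Ezu (fun x => x) measurable_id ⟨1, hB1⟩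
  have E2b : ∫ ω, -((a + b) * (ϑz (V ω) * B ω)) ∂μ
      = -((a + b) * ((∫ ω, ϑz (V ω) ∂μ) * ∫ ω, B ω ∂μ)) := by
    rw [integral_neg, integral_const_mul, red ϑz hϑzm]
  have E3 : ∫ ω, ϑaz (V ω) * ((1 - a - b) * B ω * A ω) ∂μ
      = (∫ ω, ϑaz (V ω) ∂μ) * ∫ ω, (1 - a - b) * B ω * A ω ∂μ :=
    keylem ϑaz hϑazm ⟨Cazc, hCazc⟩ Eazz Eazu (fun x => (1 - a - b) * x)
      (measurable_id.const_mul _) ⟨|1 - a - b| + |(0 : ℝ)|, hg3b⟩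
  have E4a : ∫ ω, ϑu (V ω) * (1 * A ω) ∂μ
      = (a * ∫ ω, ϑu (V ω) ∂μ) * ∫ ω, B ω ∂μ + ∫ ω, ϑu (V ω) * αu (V ω) ∂μ := by
    rw [gake ϑu hϑum ⟨Cu, hCu⟩ (fun _ => (1 : ℝ)) measurable_const ⟨1, fun _ => by norm_num⟩,
      Euz]
    have h1 : ∫ ω, (1 : ℝ) * B ω ∂μ = ∫ ω, B ω ∂μ := by simp
    have h2 : ∫ _ω, (1 : ℝ) ∂μ = 1 := by simp
    rw [h1, h2, mul_one]
  have E4b : ∫ ω, (-(a * (ϑu (V ω) * B ω)) - b * ϑu (V ω)) ∂μ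
      = -(a * ((∫ ω, ϑu (V ω) ∂μ) * ∫ ω, B ω ∂μ)) - b * ∫ ω, ϑu (V ω) ∂μ := by
    have i1 : Integrable (fun ω => -(a * (ϑu (V ω) * B ω))) μ :=
      (((btu.mul bB).integrable μ).const_mul a).neg
    have i2 : Integrable (fun ω => b * ϑu (V ω)) μ := (btu.integrable μ).const_mul b
    rw [integral_sub i1 i2, integral_neg, integral_const_mul, integral_const_mul, red ϑu hϑum]
  have EBA : ∫ ω, B ω * A ω ∂μ = a * ∫ ω, B ω ∂μ + b * ∫ ω, B ω ∂μ := by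
    have h := gake (fun _ => (1 : ℝ)) measurable_const ⟨1, fun _ => by norm_num⟩
      (fun x => x) measurable_id ⟨1, hB1⟩
    simp only [one_mul] at h
    rw [← ha, ← hb] at h
    have hBB : ∫ ω, B ω * B ω ∂μ = ∫ ω, B ω ∂μ :=
      integral_congr_ae (Filter.Eventually.of_forall fun ω => by
        rcases hB01 ω with h' | h' <;> simp only [h'] <;> ring)
    rw [h, hBB]
  have Ecoef1 : ∫ ω, A ω * (A ω - (a * B ω + b)) ∂μ = ∫ ω, (1 - a * B ω - b) * A ω ∂μ :=
    integral_congr_ae (Filter.Eventually.of_forall fun ω => by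
      rcases hA01 ω with h | h <;> simp only [h] <;> ring)
  have Ecoef2 : ∫ ω, B ω * A ω * (A ω - (a * B ω + b)) ∂μ
      = ∫ ω, (1 - a - b) * B ω * A ω ∂μ :=
    integral_congr_ae (Filter.Eventually.of_forall fun ω => by
      rcases hA01 ω with h | h <;> rcases hB01 ω with h' | h' <;> simp only [h, h'] <;> ring)
  rw [e1, e2, e3, S0, S1, E1, E2a, E2b, E3, E4a, E4b, EBA, Ecoef1, Ecoef2, Ecov]
  ring
end

section
/- Lemma 6 (third identification equation): under the outcome model, the treatment model, IV independence, and the orthogonality conditions (Assumption 2(c), unconditional form), it holds that Cov(B·(B − E[B]), (A − E[A|B])·Y) = Cov(B·(B − E[B]), A·(A − E[A|B]))·E[ϑ_a(V)] + Cov(B·(B − E[B]), A·B·(A − E[A|B]))·E[ϑ_az(V)]. -/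
open MeasureTheory ProbabilityTheory

section Aux
variable {Ω : Type*} {ms : MeasurableSpace Ω} {μ : Measure Ω} [IsProbabilityMeasure μ]

lemma bdd_integrable {f : Ω → ℝ} (hf : AEStronglyMeasurable f μ) {C : ℝ}
    (hC : ∀ ω, |f ω| ≤ C) : Integrable f μ :=
  (integrable_const C).mono' hf
    (Filter.Eventually.of_forall (fun ω => by simpa [Real.norm_eq_abs] using hC ω))

lemma integral_mul_eq_condexp {m : MeasurableSpace Ω} (hm : m ≤ ms) {g X : Ω → ℝ}
    (hg : StronglyMeasurable[m] g) {C : ℝ} (hC : ∀ ω, |g ω| ≤ C) (hX : Integrable X μ) :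
    ∫ ω, g ω * X ω ∂μ = ∫ ω, g ω * (μ[X|m]) ω ∂μ := by
  have hgX : Integrable (g * X) μ :=
    hX.bdd_mul (hg.mono hm).aestronglyMeasurable
      (Filter.Eventually.of_forall (fun ω => by simpa [Real.norm_eq_abs] using hC ω))
  have h := condExp_mul_of_stronglyMeasurable_left hg hgX hX
  calc ∫ ω, g ω * X ω ∂μ = ∫ ω, (g * X) ω ∂μ := rfl
    _ = ∫ ω, (μ[g * X|m]) ω ∂μ := (integral_condExp hm).symm
    _ = ∫ ω, (g * μ[X|m]) ω ∂μ := integral_congr_ae h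
    _ = ∫ ω, g ω * (μ[X|m]) ω ∂μ := rfl

end Aux

lemma comb2 {Ω : Type*} [MeasurableSpace Ω] {μ : Measure Ω} {g1 g2 : Ω → ℝ}
    (h1 : Integrable g1 μ) (h2 : Integrable g2 μ) (k1 k2 : ℝ) :
    ∫ ω, (k1 * g1 ω + k2 * g2 ω) ∂μ
      = k1 * ∫ ω, g1 ω ∂μ + k2 * ∫ ω, g2 ω ∂μ := by
  rw [integral_add (h1.const_mul k1) (h2.const_mul k2), integral_const_mul, integral_const_mul]

lemma comb6 {Ω : Type*} [MeasurableSpace Ω] {μ : Measure Ω} {g1 g2 g3 g4 g5 g6 : Ω → ℝ}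
    (h1 : Integrable g1 μ) (h2 : Integrable g2 μ) (h3 : Integrable g3 μ)
    (h4 : Integrable g4 μ) (h5 : Integrable g5 μ) (h6 : Integrable g6 μ)
    (k1 k2 k3 k4 k5 k6 : ℝ) :
    ∫ ω, (k1 * g1 ω + k2 * g2 ω + k3 * g3 ω + k4 * g4 ω + k5 * g5 ω + k6 * g6 ω) ∂μ
      = k1 * ∫ ω, g1 ω ∂μ + k2 * ∫ ω, g2 ω ∂μ + k3 * ∫ ω, g3 ω ∂μ
        + k4 * ∫ ω, g4 ω ∂μ + k5 * ∫ ω, g5 ω ∂μ + k6 * ∫ ω, g6 ω ∂μ := by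
  have i1 : Integrable (fun ω => k1 * g1 ω) μ := h1.const_mul k1
  have i2 : Integrable (fun ω => k2 * g2 ω) μ := h2.const_mul k2
  have i3 : Integrable (fun ω => k3 * g3 ω) μ := h3.const_mul k3
  have i4 : Integrable (fun ω => k4 * g4 ω) μ := h4.const_mul k4
  have i5 : Integrable (fun ω => k5 * g5 ω) μ := h5.const_mul k5
  have i6 : Integrable (fun ω => k6 * g6 ω) μ := h6.const_mul k6
  have p2 : Integrable (fun ω => k1 * g1 ω + k2 * g2 ω) μ := i1.add i2
  have p3 : Integrable (fun ω => k1 * g1 ω + k2 * g2 ω + k3 * g3 ω) μ := p2.add i3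
  have p4 : Integrable (fun ω => k1 * g1 ω + k2 * g2 ω + k3 * g3 ω + k4 * g4 ω) μ := p3.add i4
  have p5 : Integrable
      (fun ω => k1 * g1 ω + k2 * g2 ω + k3 * g3 ω + k4 * g4 ω + k5 * g5 ω) μ := p4.add i5
  rw [integral_add p5 i6, integral_add p4 i5, integral_add p3 i4, integral_add p2 i3,
    integral_add i1 i2, integral_const_mul, integral_const_mul, integral_const_mul,
    integral_const_mul, integral_const_mul, integral_const_mul]

lemma comb8 {Ω : Type*} [MeasurableSpace Ω] {μ : Measure Ω} {g1 g2 g3 g4 g5 g6 g7 g8 : Ω → ℝ}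
    (h1 : Integrable g1 μ) (h2 : Integrable g2 μ) (h3 : Integrable g3 μ)
    (h4 : Integrable g4 μ) (h5 : Integrable g5 μ) (h6 : Integrable g6 μ)
    (h7 : Integrable g7 μ) (h8 : Integrable g8 μ)
    (k1 k2 k3 k4 k5 k6 k7 k8 : ℝ) :
    ∫ ω, (k1 * g1 ω + k2 * g2 ω + k3 * g3 ω + k4 * g4 ω + k5 * g5 ω + k6 * g6 ω
        + k7 * g7 ω + k8 * g8 ω) ∂μ
      = k1 * ∫ ω, g1 ω ∂μ + k2 * ∫ ω, g2 ω ∂μ + k3 * ∫ ω, g3 ω ∂μ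
        + k4 * ∫ ω, g4 ω ∂μ + k5 * ∫ ω, g5 ω ∂μ + k6 * ∫ ω, g6 ω ∂μ
        + k7 * ∫ ω, g7 ω ∂μ + k8 * ∫ ω, g8 ω ∂μ := by
  have i7 : Integrable (fun ω => k7 * g7 ω) μ := h7.const_mul k7
  have i8 : Integrable (fun ω => k8 * g8 ω) μ := h8.const_mul k8
  have p6 : Integrable
      (fun ω => k1 * g1 ω + k2 * g2 ω + k3 * g3 ω + k4 * g4 ω + k5 * g5 ω + k6 * g6 ω) μ :=
    (((((h1.const_mul k1).add (h2.const_mul k2)).add (h3.const_mul k3)).add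
      (h4.const_mul k4)).add (h5.const_mul k5)).add (h6.const_mul k6)
  have p7 : Integrable
      (fun ω => k1 * g1 ω + k2 * g2 ω + k3 * g3 ω + k4 * g4 ω + k5 * g5 ω + k6 * g6 ω
        + k7 * g7 ω) μ := p6.add i7
  rw [integral_add p7 i8, integral_add p6 i7, comb6 h1 h2 h3 h4 h5 h6,
    integral_const_mul, integral_const_mul]

/-- Lemma 6 (third identification equation):
`Cov(B·(B − E[B]), (A − E[A|B])·Y)
  = Cov(B·(B − E[B]), A·(A − E[A|B]))·E[ϑ_a(V)]
    + Cov(B·(B − E[B]), A·B·(A − E[A|B]))·E[ϑ_az(V)]`. -/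
theorem lemma6_third_identification_equation
    {Ω 𝒱 : Type*} [MeasurableSpace Ω] [MeasurableSpace 𝒱]
    (μ : Measure Ω) [IsProbabilityMeasure μ]
    (V : Ω → 𝒱) (A B : Ω → ℝ)
    (hV : Measurable V) (hA : Measurable A) (hB : Measurable B)
    (hA01 : ∀ ω, A ω = 0 ∨ A ω = 1) (hB01 : ∀ ω, B ω = 0 ∨ B ω = 1)
    (αz αu : 𝒱 → ℝ) (hαzm : Measurable αz) (hαum : Measurable αu)
    (hαzb : ∃ C, ∀ x, |αz x| ≤ C) (hαub : ∃ C, ∀ x, |αu x| ≤ C)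
    (htreat : μ[A | MeasurableSpace.comap (fun ω => (B ω, V ω)) inferInstance]
        =ᵐ[μ] fun ω => αz (V ω) * B ω + αu (V ω))
    (hindep : IndepFun B V μ)
    (Y : Ω → ℝ) (hY : Integrable Y μ)
    (ϑa ϑz ϑaz ϑu : 𝒱 → ℝ)
    (hϑam : Measurable ϑa) (hϑzm : Measurable ϑz)
    (hϑazm : Measurable ϑaz) (hϑum : Measurable ϑu)
    (hϑab : ∃ C, ∀ x, |ϑa x| ≤ C) (hϑzb : ∃ C, ∀ x, |ϑz x| ≤ C)
    (hϑazb : ∃ C, ∀ x, |ϑaz x| ≤ C) (hϑub : ∃ C, ∀ x, |ϑu x| ≤ C)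
    (houtcome : μ[Y | MeasurableSpace.comap (fun ω => (V ω, A ω, B ω)) inferInstance]
        =ᵐ[μ] fun ω => ϑa (V ω) * A ω + ϑz (V ω) * B ω + ϑaz (V ω) * A ω * B ω + ϑu (V ω))
    (horth1 : covE μ (fun x => ϑa (V x)) (fun x => αz (V x)) = 0)
    (horth2 : covE μ (fun x => ϑa (V x)) (fun x => αu (V x)) = 0)
    (horth3 : covE μ (fun x => ϑz (V x)) (fun x => αz (V x)) = 0)
    (horth4 : covE μ (fun x => ϑz (V x)) (fun x => αu (V x)) = 0)
    (horth5 : covE μ (fun x => ϑaz (V x)) (fun x => αz (V x)) = 0)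
    (horth6 : covE μ (fun x => ϑaz (V x)) (fun x => αu (V x)) = 0)
    (horth7 : covE μ (fun x => αz (V x)) (fun x => ϑu (V x)) = 0)
    :
    covE μ (fun ω => B ω * (B ω - ∫ x, B x ∂μ))
        (fun ω => (A ω - (μ[A | MeasurableSpace.comap B inferInstance]) ω) * Y ω)
      = covE μ (fun ω => B ω * (B ω - ∫ x, B x ∂μ))
            (fun ω => A ω * (A ω - (μ[A | MeasurableSpace.comap B inferInstance]) ω))
          * (∫ ω, ϑa (V ω) ∂μ)
        + covE μ (fun ω => B ω * (B ω - ∫ x, B x ∂μ))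
            (fun ω => A ω * B ω * (A ω - (μ[A | MeasurableSpace.comap B inferInstance]) ω))
          * (∫ ω, ϑaz (V ω) ∂μ) := by

  classical
  obtain ⟨Cz, hCz⟩ := hαzb
  obtain ⟨Cu, hCu⟩ := hαub
  have hmB : MeasurableSpace.comap B inferInstance ≤ (inferInstance : MeasurableSpace Ω) :=
    hB.comap_le
  have hBV : Measurable fun ω => (B ω, V ω) := hB.prodMk hV
  have hmBV : MeasurableSpace.comap (fun ω => (B ω, V ω)) inferInstance
      ≤ (inferInstance : MeasurableSpace Ω) := hBV.comap_le
  have hmB_le : MeasurableSpace.comap B inferInstance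
      ≤ MeasurableSpace.comap (fun ω => (B ω, V ω)) inferInstance := by
    have h1 : MeasurableSpace.comap (fun ω => (B ω, V ω))
        (MeasurableSpace.comap Prod.fst inferInstance)
        = MeasurableSpace.comap B inferInstance := MeasurableSpace.comap_comp
    rw [← h1]
    exact MeasurableSpace.comap_mono measurable_fst.comap_le
  have hBmBV : Measurable[MeasurableSpace.comap (fun ω => (B ω, V ω)) inferInstance] B :=
    measurable_fst.comp (measurable_iff_comap_le.mpr le_rfl)
  have hVmBV : Measurable[MeasurableSpace.comap (fun ω => (B ω, V ω)) inferInstance] V :=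
    measurable_snd.comp (measurable_iff_comap_le.mpr le_rfl)
  have hBmB : Measurable[MeasurableSpace.comap B inferInstance] B :=
    measurable_iff_comap_le.mpr le_rfl
  have hB1 : ∀ ω, |B ω| ≤ 1 := by
    intro ω; rcases hB01 ω with h | h <;> simp [h]
  have hA1 : ∀ ω, |A ω| ≤ 1 := by
    intro ω; rcases hA01 ω with h | h <;> simp [h]
  set c : ℝ := ∫ ω, αz (V ω) ∂μ with hc
  set d : ℝ := ∫ ω, αu (V ω) ∂μ with hd
  have hIndVB : Indep (MeasurableSpace.comap V inferInstance)
      (MeasurableSpace.comap B inferInstance) μ := hindep.symm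
  have hαzVi : Integrable (fun ω => αz (V ω)) μ :=
    bdd_integrable ((hαzm.comp hV).aestronglyMeasurable) (fun ω => hCz (V ω))
  have hαuVi : Integrable (fun ω => αu (V ω)) μ :=
    bdd_integrable ((hαum.comp hV).aestronglyMeasurable) (fun ω => hCu (V ω))
  have hstep1 : μ[A | MeasurableSpace.comap B inferInstance]
      =ᵐ[μ] fun ω => c * B ω + d := by
    have ht : μ[μ[A | MeasurableSpace.comap (fun ω => (B ω, V ω)) inferInstance]
        | MeasurableSpace.comap B inferInstance]
        =ᵐ[μ] μ[A | MeasurableSpace.comap B inferInstance] :=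
      condExp_condExp_of_le hmB_le hmBV
    have ht2 : μ[fun ω => αz (V ω) * B ω + αu (V ω) | MeasurableSpace.comap B inferInstance]
        =ᵐ[μ] μ[A | MeasurableSpace.comap B inferInstance] :=
      (condExp_congr_ae htreat).symm.trans ht
    -- integrability of products
    have hzB : Integrable (fun ω => αz (V ω) * B ω) μ :=
      bdd_integrable (((hαzm.comp hV).mul hB).aestronglyMeasurable)
        (C := |Cz| * 1) (fun ω => by
          rw [abs_mul]
          exact mul_le_mul ((hCz (V ω)).trans (le_abs_self Cz)) (hB1 ω)
            (abs_nonneg _) (abs_nonneg _))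
    have hadd : μ[fun ω => αz (V ω) * B ω + αu (V ω) | MeasurableSpace.comap B inferInstance]
        =ᵐ[μ] μ[fun ω => αz (V ω) * B ω | MeasurableSpace.comap B inferInstance]
          + μ[fun ω => αu (V ω) | MeasurableSpace.comap B inferInstance] :=
      condExp_add hzB hαuVi _
    -- pull out B
    have hmul : μ[fun ω => αz (V ω) * B ω | MeasurableSpace.comap B inferInstance]
        =ᵐ[μ] B * μ[fun ω => αz (V ω) | MeasurableSpace.comap B inferInstance] := by
      have h0 : (fun ω => αz (V ω) * B ω) = B * fun ω => αz (V ω) := by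
        funext ω; simp [mul_comm]
      rw [h0]
      exact condExp_mul_of_stronglyMeasurable_left hBmB.stronglyMeasurable
        (by rw [← h0]; exact hzB) hαzVi
    -- independence: condexp of V-measurable given B is constant
    have hcz : μ[fun ω => αz (V ω) | MeasurableSpace.comap B inferInstance]
        =ᵐ[μ] fun _ => c :=
      condExp_indep_eq hV.comap_le hmB
        ((hαzm.comp (measurable_iff_comap_le.mpr le_rfl)).stronglyMeasurable) hIndVB
    have hcu : μ[fun ω => αu (V ω) | MeasurableSpace.comap B inferInstance]
        =ᵐ[μ] fun _ => d :=
      condExp_indep_eq hV.comap_le hmB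
        ((hαum.comp (measurable_iff_comap_le.mpr le_rfl)).stronglyMeasurable) hIndVB
    refine ht2.symm.trans (hadd.trans ?_)
    filter_upwards [hmul, hcz, hcu] with ω h1 h2 h3
    simp only [Pi.add_apply, Pi.mul_apply] at *
    rw [h1, h2, h3, mul_comm]

  -- generic integrability of bounded measurable functions
  have ibdd : ∀ {g : Ω → ℝ}, Measurable g → ∀ C : ℝ, (∀ ω, |g ω| ≤ C) → Integrable g μ :=
    fun hg C hC => bdd_integrable hg.aestronglyMeasurable hC
  have habs1 : ∀ (g h : Ω → ℝ) (Cg : ℝ), (∀ ω, |g ω| ≤ Cg) → (∀ ω, |h ω| ≤ 1) →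
      ∀ ω, |g ω * h ω| ≤ |Cg| := by
    intro g h Cg hg hh ω
    rw [abs_mul]
    calc |g ω| * |h ω| ≤ |Cg| * 1 :=
        mul_le_mul ((hg ω).trans (le_abs_self _)) (hh ω) (abs_nonneg _) (abs_nonneg _)
      _ = |Cg| := mul_one _
  -- the three atoms
  have atoms : ∀ (f : 𝒱 → ℝ), Measurable f → ∀ (C : ℝ), (∀ x, |f x| ≤ C) →
      (∫ ω, f (V ω) * B ω ∂μ = (∫ ω, f (V ω) ∂μ) * (∫ x, B x ∂μ)) ∧
      (∫ ω, f (V ω) * A ω ∂μ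
        = (∫ ω, f (V ω) * αz (V ω) ∂μ) * (∫ x, B x ∂μ) + ∫ ω, f (V ω) * αu (V ω) ∂μ) ∧
      (∫ ω, f (V ω) * (A ω * B ω) ∂μ
        = ((∫ ω, f (V ω) * αz (V ω) ∂μ) + ∫ ω, f (V ω) * αu (V ω) ∂μ) * (∫ x, B x ∂μ)) := by
    intro f hf C hC
    have hfVm : Measurable fun ω => f (V ω) := hf.comp hV
    have hfVi : Integrable (fun ω => f (V ω)) μ := ibdd hfVm C (fun ω => hC (V ω))
    have hBi : Integrable B μ := ibdd hB 1 hB1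
    -- the independence atom, for arbitrary bounded measurable f
    have hIone : ∀ (g : 𝒱 → ℝ), Measurable g → ∀ (Cg : ℝ), (∀ x, |g x| ≤ Cg) →
        ∫ ω, g (V ω) * B ω ∂μ = (∫ ω, g (V ω) ∂μ) * (∫ x, B x ∂μ) := by
      intro g hg Cg hCg
      have hind : IndepFun (fun ω => g (V ω)) B μ := hindep.symm.comp hg measurable_id
      have hgVi : Integrable (fun ω => g (V ω)) μ := ibdd (hg.comp hV) Cg (fun ω => hCg (V ω))
      exact hind.integral_mul_eq_mul_integral hgVi.aestronglyMeasurable hBi.aestronglyMeasurable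
    have h1 := hIone f hf C hC
    -- bounds on products with αz, αu
    have hfz : Measurable fun x => f x * αz x := hf.mul hαzm
    have hfu : Measurable fun x => f x * αu x := hf.mul hαum
    have hfzb : ∀ x, |f x * αz x| ≤ |C| * |Cz| := fun x => by
      rw [abs_mul]
      exact mul_le_mul ((hC x).trans (le_abs_self _)) ((hCz x).trans (le_abs_self _))
        (abs_nonneg _) (abs_nonneg _)
    have hfub : ∀ x, |f x * αu x| ≤ |C| * |Cu| := fun x => by
      rw [abs_mul]
      exact mul_le_mul ((hC x).trans (le_abs_self _)) ((hCu x).trans (le_abs_self _))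
        (abs_nonneg _) (abs_nonneg _)
    have h2 : ∫ ω, f (V ω) * A ω ∂μ
        = (∫ ω, f (V ω) * αz (V ω) ∂μ) * (∫ x, B x ∂μ) + ∫ ω, f (V ω) * αu (V ω) ∂μ := by
      have hsm : StronglyMeasurable[MeasurableSpace.comap (fun ω => (B ω, V ω)) inferInstance]
          (fun ω => f (V ω)) := (hf.comp hVmBV).stronglyMeasurable
      have hAi : Integrable A μ := ibdd hA 1 hA1
      rw [integral_mul_eq_condexp hmBV hsm (fun ω => hC (V ω)) hAi]
      rw [integral_congr_ae (g := fun ω => f (V ω) * αz (V ω) * B ω + f (V ω) * αu (V ω))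
        (by filter_upwards [htreat] with ω hω; rw [hω]; ring)]
      rw [integral_add
        (show Integrable (fun ω => f (V ω) * αz (V ω) * B ω) μ from
          ibdd ((hfVm.mul (hαzm.comp hV)).mul hB) _
            (habs1 _ B (|C| * |Cz|) (fun ω => hfzb (V ω)) hB1))
        (show Integrable (fun ω => f (V ω) * αu (V ω)) μ from
          ibdd (hfVm.mul (hαum.comp hV)) (|C| * |Cu|) (fun ω => hfub (V ω)))]
      rw [hIone (fun x => f x * αz x) hfz (|C| * |Cz|) hfzb]
    have h3 : ∫ ω, f (V ω) * (A ω * B ω) ∂μ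
        = ((∫ ω, f (V ω) * αz (V ω) ∂μ) + ∫ ω, f (V ω) * αu (V ω) ∂μ) * (∫ x, B x ∂μ) := by
      have hsm : StronglyMeasurable[MeasurableSpace.comap (fun ω => (B ω, V ω)) inferInstance]
          (fun ω => f (V ω) * B ω) := ((hf.comp hVmBV).mul hBmBV).stronglyMeasurable
      have hAi : Integrable A μ := ibdd hA 1 hA1
      have he : ∀ ω, f (V ω) * (A ω * B ω) = (f (V ω) * B ω) * A ω := fun ω => by ring
      simp only [he]
      rw [integral_mul_eq_condexp hmBV hsm
        (habs1 _ B C (fun ω => hC (V ω)) hB1 : ∀ ω, |f (V ω) * B ω| ≤ |C|) hAi]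
      rw [integral_congr_ae (g := fun ω => (f (V ω) * αz (V ω) + f (V ω) * αu (V ω)) * B ω)
        (by
          filter_upwards [htreat] with ω hω
          rw [hω]
          rcases hB01 ω with h | h <;> rw [h] <;> ring)]
      rw [hIone (fun x => f x * αz x + f x * αu x) (hfz.add hfu) (|C| * |Cz| + |C| * |Cu|)
        (fun x => (abs_add_le _ _).trans (add_le_add (hfzb x) (hfub x)))]
      rw [integral_add
        (show Integrable (fun ω => f (V ω) * αz (V ω)) μ from
          ibdd (hfVm.mul (hαzm.comp hV)) (|C| * |Cz|) (fun ω => hfzb (V ω)))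
        (show Integrable (fun ω => f (V ω) * αu (V ω)) μ from
          ibdd (hfVm.mul (hαum.comp hV)) (|C| * |Cu|) (fun ω => hfub (V ω)))]
    exact ⟨h1, h2, h3⟩

  obtain ⟨Ka, hKa⟩ := hϑab
  obtain ⟨Kz, hKz⟩ := hϑzb
  obtain ⟨Kaz, hKaz⟩ := hϑazb
  obtain ⟨Ku, hKu⟩ := hϑub
  -- outcome substitution machinery
  have hVAB : Measurable fun ω => (V ω, A ω, B ω) := hV.prodMk (hA.prodMk hB)
  have hVm3 : Measurable[MeasurableSpace.comap (fun ω => (V ω, A ω, B ω)) inferInstance] V :=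
    measurable_fst.comp (measurable_iff_comap_le.mpr le_rfl)
  have hAm3 : Measurable[MeasurableSpace.comap (fun ω => (V ω, A ω, B ω)) inferInstance] A :=
    (measurable_fst.comp measurable_snd).comp (measurable_iff_comap_le.mpr le_rfl)
  have hBm3 : Measurable[MeasurableSpace.comap (fun ω => (V ω, A ω, B ω)) inferInstance] B :=
    (measurable_snd.comp measurable_snd).comp (measurable_iff_comap_le.mpr le_rfl)
  have hout : ∀ (h : Ω → ℝ),
      Measurable[MeasurableSpace.comap (fun ω => (V ω, A ω, B ω)) inferInstance] h →
      ∀ (Ch : ℝ), (∀ ω, |h ω| ≤ Ch) →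
      ∫ ω, h ω * Y ω ∂μ
        = ∫ ω, h ω * (ϑa (V ω) * A ω + ϑz (V ω) * B ω + ϑaz (V ω) * A ω * B ω + ϑu (V ω)) ∂μ := by
    intro h hm Ch hCh
    rw [integral_mul_eq_condexp hVAB.comap_le hm.stronglyMeasurable hCh hY]
    exact integral_congr_ae (by filter_upwards [houtcome] with ω hω; rw [hω])
  -- integrability of atoms
  have hab1 : ∀ ω, |A ω * B ω| ≤ 1 := by simpa using habs1 A B 1 hA1 hB1
  have intA : Integrable A μ := ibdd hA 1 hA1
  have intAB : Integrable (fun ω => A ω * B ω) μ := ibdd (hA.mul hB) 1 hab1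
  have intf : ∀ (f : 𝒱 → ℝ), Measurable f → ∀ K : ℝ, (∀ x, |f x| ≤ K) →
      Integrable (fun ω => f (V ω)) μ ∧ Integrable (fun ω => f (V ω) * B ω) μ ∧
      Integrable (fun ω => f (V ω) * A ω) μ ∧
      Integrable (fun ω => f (V ω) * (A ω * B ω)) μ := by
    intro f hf K hK
    have h0 : Measurable fun ω => f (V ω) := hf.comp hV
    exact ⟨ibdd h0 K (fun ω => hK (V ω)),
      ibdd (h0.mul hB) _ (habs1 _ B K (fun ω => hK (V ω)) hB1),
      ibdd (h0.mul hA) _ (habs1 _ A K (fun ω => hK (V ω)) hA1),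
      ibdd (h0.mul (hA.mul hB)) _ (habs1 _ _ K (fun ω => hK (V ω)) hab1)⟩
  obtain ⟨iaV, iaVB, iaVA, iaVAB⟩ := intf ϑa hϑam Ka hKa
  obtain ⟨izV, izVB, izVA, izVAB⟩ := intf ϑz hϑzm Kz hKz
  obtain ⟨iazV, iazVB, iazVA, iazVAB⟩ := intf ϑaz hϑazm Kaz hKaz
  obtain ⟨iuV, iuVB, iuVA, iuVAB⟩ := intf ϑu hϑum Ku hKu
  -- atom value instances
  obtain ⟨haB, haA, haAB⟩ := atoms ϑa hϑam Ka hKa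
  obtain ⟨hzB, hzA, hzAB⟩ := atoms ϑz hϑzm Kz hKz
  obtain ⟨hazB, hazA, hazAB⟩ := atoms ϑaz hϑazm Kaz hKaz
  obtain ⟨huB, huA, huAB⟩ := atoms ϑu hϑum Ku hKu
  obtain ⟨h1B, h1A, h1AB⟩ := atoms (fun _ => (1 : ℝ)) measurable_const 1 (by intro x; simp)
  simp only [one_mul] at h1A h1AB
  rw [← hc, ← hd] at h1A h1AB
  -- orthogonality conversions
  have ho1 : ∫ ω, ϑa (V ω) * αz (V ω) ∂μ = (∫ ω, ϑa (V ω) ∂μ) * c := by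
    have h := horth1; simp only [covE] at h; rw [← hc] at h; linarith
  have ho2 : ∫ ω, ϑa (V ω) * αu (V ω) ∂μ = (∫ ω, ϑa (V ω) ∂μ) * d := by
    have h := horth2; simp only [covE] at h; rw [← hd] at h; linarith
  have ho3 : ∫ ω, ϑz (V ω) * αz (V ω) ∂μ = (∫ ω, ϑz (V ω) ∂μ) * c := by
    have h := horth3; simp only [covE] at h; rw [← hc] at h; linarith
  have ho4 : ∫ ω, ϑz (V ω) * αu (V ω) ∂μ = (∫ ω, ϑz (V ω) ∂μ) * d := by
    have h := horth4; simp only [covE] at h; rw [← hd] at h; linarith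
  have ho5 : ∫ ω, ϑaz (V ω) * αz (V ω) ∂μ = (∫ ω, ϑaz (V ω) ∂μ) * c := by
    have h := horth5; simp only [covE] at h; rw [← hc] at h; linarith
  have ho6 : ∫ ω, ϑaz (V ω) * αu (V ω) ∂μ = (∫ ω, ϑaz (V ω) ∂μ) * d := by
    have h := horth6; simp only [covE] at h; rw [← hd] at h; linarith
  have ho7 : ∫ ω, ϑu (V ω) * αz (V ω) ∂μ = c * ∫ ω, ϑu (V ω) ∂μ := by
    have h := horth7; simp only [covE] at h; rw [← hc] at h
    rw [show (∫ ω, ϑu (V ω) * αz (V ω) ∂μ) = ∫ ω, αz (V ω) * ϑu (V ω) ∂μ from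
      integral_congr_ae (Filter.Eventually.of_forall fun ω => mul_comm _ _)]
    linarith
  -- abbreviations
  set M := μ[A | MeasurableSpace.comap B inferInstance] with hMdef
  set b : ℝ := ∫ x, B x ∂μ with hbdef
  set tA : ℝ := ∫ ω, ϑa (V ω) ∂μ with htA
  set tZ : ℝ := ∫ ω, ϑz (V ω) ∂μ with htZ
  set tAZ : ℝ := ∫ ω, ϑaz (V ω) ∂μ with htAZ
  set tU : ℝ := ∫ ω, ϑu (V ω) ∂μ with htU
  set kk : ℝ := ∫ ω, ϑu (V ω) * αu (V ω) ∂μ with hkk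
  -- J-values
  have hJ6 : ∫ ω, A ω * B ω * (A ω - M ω) ∂μ = (1 - (c + d)) * ((c + d) * b) := by
    rw [integral_congr_ae (g := fun ω => (1 - (c + d)) * (A ω * B ω))
      (by filter_upwards [hstep1] with ω hω
          rw [hω]
          rcases hA01 ω with h | h <;> rcases hB01 ω with h' | h' <;> rw [h, h'] <;> ring),
      integral_const_mul, h1AB]
  have hJ5 : ∫ ω, B ω * (A ω * B ω * (A ω - M ω)) ∂μ = (1 - (c + d)) * ((c + d) * b) := by
    rw [integral_congr_ae (g := fun ω => (1 - (c + d)) * (A ω * B ω))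
      (by filter_upwards [hstep1] with ω hω
          rw [hω]
          rcases hA01 ω with h | h <;> rcases hB01 ω with h' | h' <;> rw [h, h'] <;> ring),
      integral_const_mul, h1AB]
  have hJ3 : ∫ ω, B ω * (A ω * (A ω - M ω)) ∂μ = (1 - (c + d)) * ((c + d) * b) := by
    rw [integral_congr_ae (g := fun ω => (1 - (c + d)) * (A ω * B ω))
      (by filter_upwards [hstep1] with ω hω
          rw [hω]
          rcases hA01 ω with h | h <;> rcases hB01 ω with h' | h' <;> rw [h, h'] <;> ring),
      integral_const_mul, h1AB]
  have hJ4 : ∫ ω, A ω * (A ω - M ω) ∂μ = (1 - d) * (c * b + d) + (-c) * ((c + d) * b) := by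
    rw [integral_congr_ae (g := fun ω => (1 - d) * A ω + (-c) * (A ω * B ω))
      (by filter_upwards [hstep1] with ω hω
          rw [hω]
          rcases hA01 ω with h | h <;> rcases hB01 ω with h' | h' <;> rw [h, h'] <;> ring),
      comb2 intA intAB, h1A, h1AB]
  have hJ1 : ∫ ω, B ω * ((A ω - M ω) * Y ω) ∂μ
      = (1 - (c + d)) * ((tA * c + tA * d) * b) + (1 - (c + d)) * ((tAZ * c + tAZ * d) * b)
        + 1 * ((tZ * c + tZ * d) * b) + (-(c + d)) * (tZ * b)
        + 1 * ((c * tU + kk) * b) + (-(c + d)) * (tU * b) := by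
    rw [integral_congr_ae (g := fun ω => (A ω * B ω - (c + d) * B ω) * Y ω)
      (by filter_upwards [hstep1] with ω hω
          rw [hω]
          rcases hB01 ω with h | h <;> rw [h] <;> ring)]
    rw [hout (fun ω => A ω * B ω - (c + d) * B ω)
      ((hAm3.mul hBm3).sub (measurable_const.mul hBm3)) (1 + |c + d|)
      (fun ω => by
        calc |A ω * B ω - (c + d) * B ω| ≤ |A ω * B ω| + |(c + d) * B ω| := abs_sub _ _
          _ ≤ 1 + |c + d| := add_le_add (hab1 ω) (by
              rw [abs_mul]
              calc |c + d| * |B ω| ≤ |c + d| * 1 :=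
                  mul_le_mul_of_nonneg_left (hB1 ω) (abs_nonneg _)
                _ = |c + d| := mul_one _))]
    rw [integral_congr_ae (g := fun ω =>
        (1 - (c + d)) * (ϑa (V ω) * (A ω * B ω)) + (1 - (c + d)) * (ϑaz (V ω) * (A ω * B ω))
        + 1 * (ϑz (V ω) * (A ω * B ω)) + (-(c + d)) * (ϑz (V ω) * B ω)
        + 1 * (ϑu (V ω) * (A ω * B ω)) + (-(c + d)) * (ϑu (V ω) * B ω))
      (by filter_upwards with ω
          rcases hA01 ω with h | h <;> rcases hB01 ω with h' | h' <;> rw [h, h'] <;> ring)]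
    rw [comb6 iaVAB iazVAB izVAB izVB iuVAB iuVB, haAB, hazAB, hzAB, hzB, huAB, huB, ho1, ho2,
      ho3, ho4, ho5, ho6, ho7]
  have hJ2 : ∫ ω, (A ω - M ω) * Y ω ∂μ
      = (1 - d) * ((tA * c) * b + tA * d) + (-c) * ((tA * c + tA * d) * b)
        + 1 * ((tZ * c + tZ * d) * b) + (-(c + d)) * (tZ * b)
        + (1 - (c + d)) * ((tAZ * c + tAZ * d) * b)
        + 1 * ((c * tU) * b + kk) + (-c) * (tU * b) + (-d) * tU := by
    rw [integral_congr_ae (g := fun ω => (A ω - (c * B ω + d)) * Y ω)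
      (by filter_upwards [hstep1] with ω hω; rw [hω])]
    rw [hout (fun ω => A ω - (c * B ω + d))
      (hAm3.sub ((measurable_const.mul hBm3).add measurable_const)) (1 + (|c| + |d|))
      (fun ω => by
        calc |A ω - (c * B ω + d)| ≤ |A ω| + |c * B ω + d| := abs_sub _ _
          _ ≤ 1 + (|c| + |d|) := add_le_add (hA1 ω) ((abs_add_le _ _).trans (add_le_add (by
              rw [abs_mul]
              calc |c| * |B ω| ≤ |c| * 1 := mul_le_mul_of_nonneg_left (hB1 ω) (abs_nonneg _)
                _ = |c| := mul_one _) le_rfl)))]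
    rw [integral_congr_ae (g := fun ω =>
        (1 - d) * (ϑa (V ω) * A ω) + (-c) * (ϑa (V ω) * (A ω * B ω))
        + 1 * (ϑz (V ω) * (A ω * B ω)) + (-(c + d)) * (ϑz (V ω) * B ω)
        + (1 - (c + d)) * (ϑaz (V ω) * (A ω * B ω))
        + 1 * (ϑu (V ω) * A ω) + (-c) * (ϑu (V ω) * B ω) + (-d) * (ϑu (V ω)))
      (by filter_upwards with ω
          rcases hA01 ω with h | h <;> rcases hB01 ω with h' | h' <;> rw [h, h'] <;> ring)]
    rw [comb8 iaVA iaVAB izVAB izVB iazVAB iuVA iuVB iuV, haA, haAB, hzAB, hzB, hazAB,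
      huA, huB, ho1, ho2, ho3, ho4, ho5, ho6, ho7]
  -- the integral of the instrument weight
  have hWint : ∫ ω, B ω * (B ω - b) ∂μ = (1 - b) * b := by
    rw [integral_congr_ae (g := fun ω => (1 - b) * B ω)
      (by filter_upwards with ω; rcases hB01 ω with h | h <;> rw [h] <;> ring),
      integral_const_mul, ← hbdef]
  -- evaluate the three covariances
  have hC1 : covE μ (fun ω => B ω * (B ω - b)) (fun ω => (A ω - M ω) * Y ω)
      = (1 - b) * ((∫ ω, B ω * ((A ω - M ω) * Y ω) ∂μ) - b * ∫ ω, (A ω - M ω) * Y ω ∂μ) := by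
    simp only [covE]
    rw [integral_congr_ae (g := fun ω => (1 - b) * (B ω * ((A ω - M ω) * Y ω)))
      (by filter_upwards with ω; rcases hB01 ω with h | h <;> rw [h] <;> ring),
      integral_const_mul, hWint]
    ring
  have hC2 : covE μ (fun ω => B ω * (B ω - b)) (fun ω => A ω * (A ω - M ω))
      = (1 - b) * ((∫ ω, B ω * (A ω * (A ω - M ω)) ∂μ) - b * ∫ ω, A ω * (A ω - M ω) ∂μ) := by
    simp only [covE]
    rw [integral_congr_ae (g := fun ω => (1 - b) * (B ω * (A ω * (A ω - M ω))))
      (by filter_upwards with ω; rcases hB01 ω with h | h <;> rw [h] <;> ring),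
      integral_const_mul, hWint]
    ring
  have hC3 : covE μ (fun ω => B ω * (B ω - b)) (fun ω => A ω * B ω * (A ω - M ω))
      = (1 - b) * ((∫ ω, B ω * (A ω * B ω * (A ω - M ω)) ∂μ)
          - b * ∫ ω, A ω * B ω * (A ω - M ω) ∂μ) := by
    simp only [covE]
    rw [integral_congr_ae (g := fun ω => (1 - b) * (B ω * (A ω * B ω * (A ω - M ω))))
      (by filter_upwards with ω; rcases hB01 ω with h | h <;> rw [h] <;> ring),
      integral_const_mul, hWint]
    ring
  rw [hC1, hC2, hC3, hJ1, hJ2, hJ3, hJ4, hJ5, hJ6]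
  ring
end

section
/- Theorem 1 (nonparametric identification): under the outcome model, the treatment model, IV independence, and the orthogonality conditions (Assumption 2(c), unconditional form), the vector x* = (E[ϑ_a(V)], E[ϑ_z(V)], E[ϑ_az(V)]) ∈ ℝ³ satisfies the linear system M·x = c, where the 3×3 matrix M has rows (E[(B−E[B])(A−E[A|B])A], 0, E[B(B−E[B])(A−E[A|B])A]), (E[A(B−E[B])], E[B(B−E[B])], E[AB(B−E[B])]), and (Cov(B(B−E[B]), A(A−E[A|B])), 0, Cov(B(B−E[B]), AB(A−E[A|B]))), and c = (E[(B−E[B])(A−E[A|B])Y], E[(B−E[B])Y], Cov(B(B−E[B]), (A−E[A|B])Y)). Consequently, if M is invertible, then x* is the unique solution of this system, i.e. every x ∈ ℝ³ with M·x = c equals x* (the causal contrasts E[ϑ_a(V)], E[ϑ_z(V)], E[ϑ_az(V)] are identified from the joint distribution of (Y, A, B)). -/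
open MeasureTheory ProbabilityTheory

set_option linter.unusedSectionVars false
set_option linter.unusedVariables false

section aux
variable {Ω 𝒱 : Type*} [instΩ : MeasurableSpace Ω] [MeasurableSpace 𝒱]
  {μ : Measure Ω} [IsProbabilityMeasure μ]
  {V : Ω → 𝒱} {A B : Ω → ℝ}

lemma bdd_comp (hB01 : ∀ ω, B ω = 0 ∨ B ω = 1) (w : ℝ → ℝ) : ∃ C, ∀ ω, |w (B ω)| ≤ C :=
  ⟨max |w 0| |w 1|, fun ω => by
    rcases hB01 ω with h|h <;> rw [h]
    · exact le_max_left _ _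
    · exact le_max_right _ _⟩

lemma bdd_mul {f g : Ω → ℝ} (hf : ∃ C, ∀ ω, |f ω| ≤ C) (hg : ∃ C, ∀ ω, |g ω| ≤ C) :
    ∃ C, ∀ ω, |f ω * g ω| ≤ C := by
  obtain ⟨C, hC⟩ := hf; obtain ⟨D, hD⟩ := hg
  refine ⟨max C 0 * max D 0, fun ω => ?_⟩
  rw [abs_mul]
  exact mul_le_mul ((hC ω).trans (le_max_left _ _)) ((hD ω).trans (le_max_left _ _))
    (abs_nonneg _) (le_max_right _ _)

lemma integrable_of_bdd {f : Ω → ℝ} (hf : Measurable f) (hb : ∃ C, ∀ ω, |f ω| ≤ C) :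
    Integrable f μ := by
  obtain ⟨C, hC⟩ := hb
  exact (integrable_const C).mono' hf.aestronglyMeasurable
    (Filter.Eventually.of_forall fun ω => by simpa using hC ω)

lemma tower_mul {m : MeasurableSpace Ω} (hm : m ≤ instΩ) {f g h : Ω → ℝ}
    (hf : StronglyMeasurable[m] f) (hfb : ∃ C, ∀ ω, |f ω| ≤ C)
    (hg : Integrable g μ) (hh : μ[g|m] =ᵐ[μ] h) :
    ∫ ω, f ω * g ω ∂μ = ∫ ω, f ω * h ω ∂μ := by
  obtain ⟨C, hC⟩ := hfb
  have hfg : Integrable (f * g) μ :=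
    hg.bdd_mul (hf.mono hm).aestronglyMeasurable (ae_of_all _ fun ω => by simpa using hC ω)
  calc ∫ ω, f ω * g ω ∂μ = ∫ ω, (μ[f * g|m]) ω ∂μ := (integral_condExp hm).symm
    _ = ∫ ω, f ω * (μ[g|m]) ω ∂μ :=
        integral_congr_ae ((condExp_mul_of_stronglyMeasurable_left hf hfg hg).mono fun ω hω => by
          simpa using hω)
    _ = ∫ ω, f ω * h ω ∂μ :=
        integral_congr_ae (hh.mono fun ω hω => by dsimp only; rw [hω])

lemma indep_fact (hindep : IndepFun B V μ) (hB : Measurable B) (hV : Measurable V)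
    {w : ℝ → ℝ} {q : 𝒱 → ℝ} (hw : Measurable w) (hq : Measurable q) :
    ∫ ω, w (B ω) * q (V ω) ∂μ = (∫ ω, w (B ω) ∂μ) * ∫ ω, q (V ω) ∂μ := by
  have h := (hindep.comp hw hq).integral_mul_eq_mul_integral
    ((hw.comp hB).aestronglyMeasurable) ((hq.comp hV).aestronglyMeasurable)
  simpa [Function.comp, Pi.mul_apply] using h

lemma condexp_fun_indep (hindep : IndepFun B V μ) (hB : Measurable B) (hV : Measurable V)
    {q : 𝒱 → ℝ} (hq : Measurable q) :
    μ[fun ω => q (V ω)|MeasurableSpace.comap B inferInstance]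
      =ᵐ[μ] fun _ => ∫ ω, q (V ω) ∂μ := by
  have h := condExp_indep_eq (μ := μ) (f := fun ω => q (V ω))
    hV.comap_le hB.comap_le
    ((hq.comp (measurable_iff_comap_le.mpr le_rfl)).stronglyMeasurable) hindep.symm
  exact h
end aux

section red
variable {Ω 𝒱 : Type*} [instΩ : MeasurableSpace Ω] [MeasurableSpace 𝒱]
  {μ : Measure Ω} [IsProbabilityMeasure μ]
  {V : Ω → 𝒱} {A B : Ω → ℝ}

lemma red (hindep : IndepFun B V μ) (hV : Measurable V) (hA : Measurable A) (hB : Measurable B)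
    (hA01 : ∀ ω, A ω = 0 ∨ A ω = 1) (hB01 : ∀ ω, B ω = 0 ∨ B ω = 1)
    {αz αu : 𝒱 → ℝ} (hαzm : Measurable αz) (hαum : Measurable αu)
    (hαzb : ∃ C, ∀ x, |αz x| ≤ C) (hαub : ∃ C, ∀ x, |αu x| ≤ C)
    (htreat : μ[A|MeasurableSpace.comap (fun ω => (B ω, V ω)) inferInstance]
        =ᵐ[μ] fun ω => αz (V ω) * B ω + αu (V ω))
    {w : ℝ → ℝ} (hw : Measurable w) {q : 𝒱 → ℝ} (hq : Measurable q)
    (hqb : ∃ C, ∀ x, |q x| ≤ C) :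
    ∫ ω, w (B ω) * q (V ω) * A ω ∂μ
      = (∫ ω, q (V ω) * αz (V ω) ∂μ) * (∫ ω, w (B ω) * B ω ∂μ)
        + (∫ ω, q (V ω) * αu (V ω) ∂μ) * (∫ ω, w (B ω) ∂μ) := by
  obtain ⟨Cq, hCq⟩ := hqb
  have hqVb : ∃ C, ∀ ω, |q (V ω)| ≤ C := ⟨Cq, fun ω => hCq (V ω)⟩
  have hm2 : MeasurableSpace.comap (fun ω => (B ω, V ω)) inferInstance ≤ instΩ :=
    (hB.prodMk hV).comap_le
  have hfSM : StronglyMeasurable[MeasurableSpace.comap (fun ω => (B ω, V ω)) inferInstance]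
      (fun ω => w (B ω) * q (V ω)) :=
    (((hw.comp measurable_fst).mul (hq.comp measurable_snd)).comp
      (measurable_iff_comap_le.mpr le_rfl)).stronglyMeasurable
  have hfb : ∃ C, ∀ ω, |w (B ω) * q (V ω)| ≤ C := bdd_mul (bdd_comp hB01 w) hqVb
  have hAint : Integrable A μ := integrable_of_bdd hA
    ⟨1, fun ω => by rcases hA01 ω with h|h <;> simp [h]⟩
  have step1 : ∫ ω, w (B ω) * q (V ω) * A ω ∂μ
      = ∫ ω, w (B ω) * q (V ω) * (αz (V ω) * B ω + αu (V ω)) ∂μ :=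
    tower_mul hm2 hfSM hfb hAint htreat
  have i1 : Integrable (fun ω => w (B ω) * B ω * (q (V ω) * αz (V ω))) μ :=
    integrable_of_bdd (((hw.comp hB).mul hB).mul ((hq.comp hV).mul (hαzm.comp hV)))
      (bdd_mul (bdd_mul (bdd_comp hB01 w) (bdd_comp hB01 id))
        (bdd_mul hqVb ⟨hαzb.choose, fun ω => hαzb.choose_spec (V ω)⟩))
  have i2 : Integrable (fun ω => w (B ω) * (q (V ω) * αu (V ω))) μ :=
    integrable_of_bdd ((hw.comp hB).mul ((hq.comp hV).mul (hαum.comp hV)))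
      (bdd_mul (bdd_comp hB01 w) (bdd_mul hqVb ⟨hαub.choose, fun ω => hαub.choose_spec (V ω)⟩))
  have step2 : ∫ ω, w (B ω) * q (V ω) * (αz (V ω) * B ω + αu (V ω)) ∂μ
      = (∫ ω, w (B ω) * B ω * (q (V ω) * αz (V ω)) ∂μ)
        + ∫ ω, w (B ω) * (q (V ω) * αu (V ω)) ∂μ := by
    rw [← integral_add i1 i2]
    exact integral_congr_ae (Filter.Eventually.of_forall fun ω => by dsimp only; ring)
  have e1 : ∫ ω, w (B ω) * B ω * (q (V ω) * αz (V ω)) ∂μ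
      = (∫ ω, w (B ω) * B ω ∂μ) * ∫ ω, q (V ω) * αz (V ω) ∂μ :=
    indep_fact hindep hB hV (w := fun b => w b * b) (q := fun v => q v * αz v)
      (hw.mul measurable_id) (hq.mul hαzm)
  have e2 : ∫ ω, w (B ω) * (q (V ω) * αu (V ω)) ∂μ
      = (∫ ω, w (B ω) ∂μ) * ∫ ω, q (V ω) * αu (V ω) ∂μ :=
    indep_fact hindep hB hV (w := w) (q := fun v => q v * αu v) hw (hq.mul hαum)
  rw [step1, step2, e1, e2]; ring

end red

section master
variable {Ω 𝒱 : Type*} [instΩ : MeasurableSpace Ω] [MeasurableSpace 𝒱]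
  {μ : Measure Ω} [IsProbabilityMeasure μ]
  {V : Ω → 𝒱} {A B : Ω → ℝ}

lemma integral_add6_s15 {g1 g2 g3 g4 g5 g6 : Ω → ℝ} (h1 : Integrable g1 μ) (h2 : Integrable g2 μ)
    (h3 : Integrable g3 μ) (h4 : Integrable g4 μ) (h5 : Integrable g5 μ) (h6 : Integrable g6 μ) :
    ∫ ω, g1 ω + g2 ω + g3 ω + g4 ω + g5 ω + g6 ω ∂μ
      = (∫ ω, g1 ω ∂μ) + (∫ ω, g2 ω ∂μ) + (∫ ω, g3 ω ∂μ) + (∫ ω, g4 ω ∂μ)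
        + (∫ ω, g5 ω ∂μ) + (∫ ω, g6 ω ∂μ) := by
  calc ∫ ω, g1 ω + g2 ω + g3 ω + g4 ω + g5 ω + g6 ω ∂μ
      = (∫ ω, g1 ω + g2 ω + g3 ω + g4 ω + g5 ω ∂μ) + ∫ ω, g6 ω ∂μ :=
        integral_add ((((h1.add h2).add h3).add h4).add h5) h6
    _ = ((∫ ω, g1 ω + g2 ω + g3 ω + g4 ω ∂μ) + ∫ ω, g5 ω ∂μ) + ∫ ω, g6 ω ∂μ := by
        rw [show ∫ ω, g1 ω + g2 ω + g3 ω + g4 ω + g5 ω ∂μ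
          = (∫ ω, g1 ω + g2 ω + g3 ω + g4 ω ∂μ) + ∫ ω, g5 ω ∂μ from
          integral_add (((h1.add h2).add h3).add h4) h5]
    _ = (((∫ ω, g1 ω + g2 ω + g3 ω ∂μ) + ∫ ω, g4 ω ∂μ) + ∫ ω, g5 ω ∂μ) + ∫ ω, g6 ω ∂μ := by
        rw [show ∫ ω, g1 ω + g2 ω + g3 ω + g4 ω ∂μ
          = (∫ ω, g1 ω + g2 ω + g3 ω ∂μ) + ∫ ω, g4 ω ∂μ from
          integral_add ((h1.add h2).add h3) h4]
    _ = _ := by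
        rw [show ∫ ω, g1 ω + g2 ω + g3 ω ∂μ
          = (∫ ω, g1 ω + g2 ω ∂μ) + ∫ ω, g3 ω ∂μ from integral_add (h1.add h2) h3,
          show ∫ ω, g1 ω + g2 ω ∂μ
          = (∫ ω, g1 ω ∂μ) + ∫ ω, g2 ω ∂μ from integral_add h1 h2]

lemma integral_add3 {g1 g2 g3 : Ω → ℝ} (h1 : Integrable g1 μ) (h2 : Integrable g2 μ)
    (h3 : Integrable g3 μ) :
    ∫ ω, g1 ω + g2 ω + g3 ω ∂μ
      = (∫ ω, g1 ω ∂μ) + (∫ ω, g2 ω ∂μ) + (∫ ω, g3 ω ∂μ) := by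
  calc ∫ ω, g1 ω + g2 ω + g3 ω ∂μ
      = (∫ ω, g1 ω + g2 ω ∂μ) + ∫ ω, g3 ω ∂μ := integral_add (h1.add h2) h3
    _ = _ := by
      rw [show ∫ ω, g1 ω + g2 ω ∂μ
        = (∫ ω, g1 ω ∂μ) + ∫ ω, g2 ω ∂μ from integral_add h1 h2]

end master

section master2
variable {Ω 𝒱 : Type*} [instΩ : MeasurableSpace Ω] [MeasurableSpace 𝒱]
  {μ : Measure Ω} [IsProbabilityMeasure μ]
  {V : Ω → 𝒱} {A B : Ω → ℝ}

lemma master (hindep : IndepFun B V μ) (hV : Measurable V) (hA : Measurable A) (hB : Measurable B)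
    (hA01 : ∀ ω, A ω = 0 ∨ A ω = 1) (hB01 : ∀ ω, B ω = 0 ∨ B ω = 1)
    {αz αu : 𝒱 → ℝ} (hαzm : Measurable αz) (hαum : Measurable αu)
    (hαzb : ∃ C, ∀ x, |αz x| ≤ C) (hαub : ∃ C, ∀ x, |αu x| ≤ C)
    (htreat : μ[A|MeasurableSpace.comap (fun ω => (B ω, V ω)) inferInstance]
        =ᵐ[μ] fun ω => αz (V ω) * B ω + αu (V ω))
    {Y : Ω → ℝ} (hY : Integrable Y μ)
    {ϑa ϑz ϑaz ϑu : 𝒱 → ℝ}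
    (hϑam : Measurable ϑa) (hϑzm : Measurable ϑz) (hϑazm : Measurable ϑaz) (hϑum : Measurable ϑu)
    (hϑab : ∃ C, ∀ x, |ϑa x| ≤ C) (hϑzb : ∃ C, ∀ x, |ϑz x| ≤ C)
    (hϑazb : ∃ C, ∀ x, |ϑaz x| ≤ C) (hϑub : ∃ C, ∀ x, |ϑu x| ≤ C)
    (houtcome : μ[Y|MeasurableSpace.comap (fun ω => (V ω, A ω, B ω)) inferInstance]
        =ᵐ[μ] fun ω => ϑa (V ω) * A ω + ϑz (V ω) * B ω + ϑaz (V ω) * A ω * B ω + ϑu (V ω))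
    {az au : ℝ} (haz : ∫ ω, αz (V ω) ∂μ = az) (hau : ∫ ω, αu (V ω) ∂μ = au)
    (o1 : ∫ ω, ϑa (V ω) * αz (V ω) ∂μ = (∫ ω, ϑa (V ω) ∂μ) * az)
    (o2 : ∫ ω, ϑa (V ω) * αu (V ω) ∂μ = (∫ ω, ϑa (V ω) ∂μ) * au)
    (o3 : ∫ ω, ϑz (V ω) * αz (V ω) ∂μ = (∫ ω, ϑz (V ω) ∂μ) * az)
    (o4 : ∫ ω, ϑz (V ω) * αu (V ω) ∂μ = (∫ ω, ϑz (V ω) ∂μ) * au)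
    (o5 : ∫ ω, ϑaz (V ω) * αz (V ω) ∂μ = (∫ ω, ϑaz (V ω) ∂μ) * az)
    (o6 : ∫ ω, ϑaz (V ω) * αu (V ω) ∂μ = (∫ ω, ϑaz (V ω) ∂μ) * au)
    (o7 : ∫ ω, ϑu (V ω) * αz (V ω) ∂μ = (∫ ω, ϑu (V ω) ∂μ) * az)
    {w : ℝ → ℝ} (hw : Measurable w) :
    ∫ ω, w (B ω) * (A ω - (az * B ω + au)) * Y ω ∂μ
      = (∫ ω, ϑa (V ω) ∂μ) * (∫ ω, w (B ω) * (A ω - (az * B ω + au)) * A ω ∂μ)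
        + (∫ ω, ϑaz (V ω) ∂μ) * (∫ ω, w (B ω) * (A ω - (az * B ω + au)) * (A ω * B ω) ∂μ)
        + ((∫ ω, ϑu (V ω) * αu (V ω) ∂μ) - (∫ ω, ϑu (V ω) ∂μ) * au)
            * (∫ ω, w (B ω) ∂μ) := by
  -- basic measurability / boundedness facts
  have hwB : Measurable (fun ω => w (B ω)) := hw.comp hB
  have bA : ∃ C, ∀ ω, |A ω| ≤ C := ⟨1, fun ω => by rcases hA01 ω with h|h <;> simp [h]⟩
  have bϑa : ∃ C, ∀ ω, |ϑa (V ω)| ≤ C := ⟨hϑab.choose, fun ω => hϑab.choose_spec (V ω)⟩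
  have bϑz : ∃ C, ∀ ω, |ϑz (V ω)| ≤ C := ⟨hϑzb.choose, fun ω => hϑzb.choose_spec (V ω)⟩
  have bϑaz : ∃ C, ∀ ω, |ϑaz (V ω)| ≤ C := ⟨hϑazb.choose, fun ω => hϑazb.choose_spec (V ω)⟩
  have bϑu : ∃ C, ∀ ω, |ϑu (V ω)| ≤ C := ⟨hϑub.choose, fun ω => hϑub.choose_spec (V ω)⟩
  have hm1 : MeasurableSpace.comap (fun ω => (V ω, A ω, B ω)) inferInstance ≤ instΩ :=
    (hV.prodMk (hA.prodMk hB)).comap_le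
  have hfSM : StronglyMeasurable[MeasurableSpace.comap (fun ω => (V ω, A ω, B ω)) inferInstance]
      (fun ω => w (B ω) * (A ω - (az * B ω + au))) :=
    (((hw.comp measurable_snd.snd).mul
      (measurable_snd.fst.sub ((measurable_snd.snd.const_mul az).add measurable_const))).comp
      (measurable_iff_comap_le.mpr le_rfl)).stronglyMeasurable
  have hfb : ∃ C, ∀ ω, |w (B ω) * (A ω - (az * B ω + au))| ≤ C := by
    refine bdd_mul (bdd_comp hB01 w) ⟨1 + (|az| + |au|), fun ω => ?_⟩
    have h2 : |az * B ω + au| ≤ |az| + |au| := by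
      refine (abs_add_le _ _).trans (add_le_add ?_ le_rfl)
      rw [abs_mul]
      have : |B ω| ≤ 1 := by rcases hB01 ω with h|h <;> simp [h]
      nlinarith [abs_nonneg az]
    have h1 : |A ω| ≤ 1 := by rcases hA01 ω with h|h <;> simp [h]
    calc |A ω - (az * B ω + au)| ≤ |A ω| + |az * B ω + au| := abs_sub _ _
      _ ≤ 1 + (|az| + |au|) := add_le_add h1 h2
  -- integrability of the six pieces
  have mAb : Measurable (fun ω => (1 : ℝ) - (az * B ω + au)) :=
    measurable_const.sub ((hB.const_mul az).add measurable_const)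
  have ig1 : Integrable (fun ω => w (B ω) * (1 - (az * B ω + au)) * ϑa (V ω) * A ω) μ :=
    integrable_of_bdd (((hwB.mul mAb).mul (hϑam.comp hV)).mul hA)
      (bdd_mul (bdd_mul (bdd_mul (bdd_comp hB01 w)
        (bdd_comp hB01 (fun b => 1 - (az * b + au)))) bϑa) bA)
  have ig2 : Integrable (fun ω => w (B ω) * B ω * ϑz (V ω) * A ω) μ :=
    integrable_of_bdd (((hwB.mul hB).mul (hϑzm.comp hV)).mul hA)
      (bdd_mul (bdd_mul (bdd_mul (bdd_comp hB01 w) (bdd_comp hB01 id)) bϑz) bA)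
  have ig3 : Integrable (fun ω => w (B ω) * B ω * (1 - (az * B ω + au)) * ϑaz (V ω) * A ω) μ :=
    integrable_of_bdd ((((hwB.mul hB).mul mAb).mul (hϑazm.comp hV)).mul hA)
      (bdd_mul (bdd_mul (bdd_mul (bdd_mul (bdd_comp hB01 w) (bdd_comp hB01 id))
        (bdd_comp hB01 (fun b => 1 - (az * b + au)))) bϑaz) bA)
  have ig4 : Integrable (fun ω => w (B ω) * ϑu (V ω) * A ω) μ :=
    integrable_of_bdd ((hwB.mul (hϑum.comp hV)).mul hA)
      (bdd_mul (bdd_mul (bdd_comp hB01 w) bϑu) bA)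
  have ig5 : Integrable (fun ω => -(w (B ω) * (az * B ω + au) * B ω) * ϑz (V ω)) μ :=
    integrable_of_bdd ((((hwB.mul ((hB.const_mul az).add measurable_const)).mul hB).neg).mul
      (hϑzm.comp hV))
      (bdd_mul (bdd_comp hB01 (fun b => -(w b * (az * b + au) * b))) bϑz)
  have ig6 : Integrable (fun ω => -(w (B ω) * (az * B ω + au)) * ϑu (V ω)) μ :=
    integrable_of_bdd (((hwB.mul ((hB.const_mul az).add measurable_const)).neg).mul
      (hϑum.comp hV))
      (bdd_mul (bdd_comp hB01 (fun b => -(w b * (az * b + au)))) bϑu)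
  -- the six reduced values
  have h1 : ∫ ω, w (B ω) * (1 - (az * B ω + au)) * ϑa (V ω) * A ω ∂μ
      = (∫ ω, ϑa (V ω) * αz (V ω) ∂μ)
          * (∫ ω, w (B ω) * (1 - (az * B ω + au)) * B ω ∂μ)
        + (∫ ω, ϑa (V ω) * αu (V ω) ∂μ)
          * (∫ ω, w (B ω) * (1 - (az * B ω + au)) ∂μ) :=
    red hindep hV hA hB hA01 hB01 hαzm hαum hαzb hαub htreat
      (hw.mul (measurable_const.sub ((measurable_id.const_mul az).add measurable_const)))
      hϑam hϑab
  have h2 : ∫ ω, w (B ω) * B ω * ϑz (V ω) * A ω ∂μ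
      = (∫ ω, ϑz (V ω) * αz (V ω) ∂μ) * (∫ ω, w (B ω) * B ω * B ω ∂μ)
        + (∫ ω, ϑz (V ω) * αu (V ω) ∂μ) * (∫ ω, w (B ω) * B ω ∂μ) :=
    red hindep hV hA hB hA01 hB01 hαzm hαum hαzb hαub htreat
      (hw.mul measurable_id) hϑzm hϑzb
  have h3 : ∫ ω, w (B ω) * B ω * (1 - (az * B ω + au)) * ϑaz (V ω) * A ω ∂μ
      = (∫ ω, ϑaz (V ω) * αz (V ω) ∂μ)
          * (∫ ω, w (B ω) * B ω * (1 - (az * B ω + au)) * B ω ∂μ)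
        + (∫ ω, ϑaz (V ω) * αu (V ω) ∂μ)
          * (∫ ω, w (B ω) * B ω * (1 - (az * B ω + au)) ∂μ) :=
    red hindep hV hA hB hA01 hB01 hαzm hαum hαzb hαub htreat
      ((hw.mul measurable_id).mul
        (measurable_const.sub ((measurable_id.const_mul az).add measurable_const)))
      hϑazm hϑazb
  have h4 : ∫ ω, w (B ω) * ϑu (V ω) * A ω ∂μ
      = (∫ ω, ϑu (V ω) * αz (V ω) ∂μ) * (∫ ω, w (B ω) * B ω ∂μ)
        + (∫ ω, ϑu (V ω) * αu (V ω) ∂μ) * (∫ ω, w (B ω) ∂μ) :=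
    red hindep hV hA hB hA01 hB01 hαzm hαum hαzb hαub htreat hw hϑum hϑub
  have h5 : ∫ ω, -(w (B ω) * (az * B ω + au) * B ω) * ϑz (V ω) ∂μ
      = (∫ ω, -(w (B ω) * (az * B ω + au) * B ω) ∂μ) * ∫ ω, ϑz (V ω) ∂μ :=
    indep_fact hindep hB hV (w := fun b => -(w b * (az * b + au) * b))
      (((hw.mul ((measurable_id.const_mul az).add measurable_const)).mul measurable_id).neg)
      hϑzm
  have h6 : ∫ ω, -(w (B ω) * (az * B ω + au)) * ϑu (V ω) ∂μ
      = (∫ ω, -(w (B ω) * (az * B ω + au)) ∂μ) * ∫ ω, ϑu (V ω) ∂μ :=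
    indep_fact hindep hB hV (w := fun b => -(w b * (az * b + au)))
      ((hw.mul ((measurable_id.const_mul az).add measurable_const)).neg) hϑum
  -- reduction of the two coefficient integrals
  have hP : ∫ ω, w (B ω) * (A ω - (az * B ω + au)) * A ω ∂μ
      = az * (∫ ω, w (B ω) * (1 - (az * B ω + au)) * B ω ∂μ)
        + au * (∫ ω, w (B ω) * (1 - (az * B ω + au)) ∂μ) := by
    have e1 : ∫ ω, w (B ω) * (A ω - (az * B ω + au)) * A ω ∂μ
        = ∫ ω, w (B ω) * (1 - (az * B ω + au)) * (1 : ℝ) * A ω ∂μ :=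
      integral_congr_ae (Filter.Eventually.of_forall fun ω => by
        rcases hA01 ω with h|h <;> simp only [h] <;> ring)
    have e2 : ∫ ω, w (B ω) * (1 - (az * B ω + au)) * (1 : ℝ) * A ω ∂μ
        = (∫ ω, (1 : ℝ) * αz (V ω) ∂μ)
            * (∫ ω, w (B ω) * (1 - (az * B ω + au)) * B ω ∂μ)
          + (∫ ω, (1 : ℝ) * αu (V ω) ∂μ)
            * (∫ ω, w (B ω) * (1 - (az * B ω + au)) ∂μ) :=
      red hindep hV hA hB hA01 hB01 hαzm hαum hαzb hαub htreat
        (hw.mul (measurable_const.sub ((measurable_id.const_mul az).add measurable_const)))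
        (q := fun _ => (1 : ℝ)) measurable_const ⟨1, by simp⟩
    rw [e1, e2]
    simp only [one_mul]
    rw [haz, hau]
  have hQ : ∫ ω, w (B ω) * (A ω - (az * B ω + au)) * (A ω * B ω) ∂μ
      = az * (∫ ω, w (B ω) * B ω * (1 - (az * B ω + au)) * B ω ∂μ)
        + au * (∫ ω, w (B ω) * B ω * (1 - (az * B ω + au)) ∂μ) := by
    have e1 : ∫ ω, w (B ω) * (A ω - (az * B ω + au)) * (A ω * B ω) ∂μ
        = ∫ ω, w (B ω) * B ω * (1 - (az * B ω + au)) * (1 : ℝ) * A ω ∂μ :=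
      integral_congr_ae (Filter.Eventually.of_forall fun ω => by
        rcases hA01 ω with h|h <;> simp only [h] <;> ring)
    have e2 : ∫ ω, w (B ω) * B ω * (1 - (az * B ω + au)) * (1 : ℝ) * A ω ∂μ
        = (∫ ω, (1 : ℝ) * αz (V ω) ∂μ)
            * (∫ ω, w (B ω) * B ω * (1 - (az * B ω + au)) * B ω ∂μ)
          + (∫ ω, (1 : ℝ) * αu (V ω) ∂μ)
            * (∫ ω, w (B ω) * B ω * (1 - (az * B ω + au)) ∂μ) :=
      red hindep hV hA hB hA01 hB01 hαzm hαum hαzb hαub htreat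
        ((hw.mul measurable_id).mul
          (measurable_const.sub ((measurable_id.const_mul az).add measurable_const)))
        (q := fun _ => (1 : ℝ)) measurable_const ⟨1, by simp⟩
    rw [e1, e2]
    simp only [one_mul]
    rw [haz, hau]
  -- two cancellation identities
  have ia : Integrable (fun ω => az * (w (B ω) * B ω * B ω)) μ :=
    integrable_of_bdd (((hwB.mul hB).mul hB).const_mul az)
      (bdd_comp hB01 (fun b => az * (w b * b * b)))
  have ib : Integrable (fun ω => au * (w (B ω) * B ω)) μ :=
    integrable_of_bdd ((hwB.mul hB).const_mul au)
      (bdd_comp hB01 (fun b => au * (w b * b)))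
  have ic : Integrable (fun ω => -(w (B ω) * (az * B ω + au) * B ω)) μ :=
    integrable_of_bdd (((hwB.mul ((hB.const_mul az).add measurable_const)).mul hB).neg)
      (bdd_comp hB01 (fun b => -(w b * (az * b + au) * b)))
  have sz : az * (∫ ω, w (B ω) * B ω * B ω ∂μ) + au * (∫ ω, w (B ω) * B ω ∂μ)
      + (∫ ω, -(w (B ω) * (az * B ω + au) * B ω) ∂μ) = 0 := by
    have h := integral_add3 ia ib ic
    rw [integral_const_mul, integral_const_mul] at h
    rw [← h]
    calc ∫ ω, az * (w (B ω) * B ω * B ω) + au * (w (B ω) * B ω)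
          + -(w (B ω) * (az * B ω + au) * B ω) ∂μ
        = ∫ ω, (0 : ℝ) ∂μ :=
          integral_congr_ae (Filter.Eventually.of_forall fun ω => by ring)
      _ = 0 := integral_zero _ _
  have ia' : Integrable (fun ω => az * (w (B ω) * B ω)) μ :=
    integrable_of_bdd ((hwB.mul hB).const_mul az)
      (bdd_comp hB01 (fun b => az * (w b * b)))
  have ib' : Integrable (fun ω => au * (w (B ω))) μ :=
    integrable_of_bdd (hwB.const_mul au) (bdd_comp hB01 (fun b => au * w b))
  have ic' : Integrable (fun ω => -(w (B ω) * (az * B ω + au))) μ :=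
    integrable_of_bdd ((hwB.mul ((hB.const_mul az).add measurable_const)).neg)
      (bdd_comp hB01 (fun b => -(w b * (az * b + au))))
  have su : az * (∫ ω, w (B ω) * B ω ∂μ) + au * (∫ ω, w (B ω) ∂μ)
      + (∫ ω, -(w (B ω) * (az * B ω + au)) ∂μ) = 0 := by
    have h := integral_add3 ia' ib' ic'
    rw [integral_const_mul, integral_const_mul] at h
    rw [← h]
    calc ∫ ω, az * (w (B ω) * B ω) + au * (w (B ω))
          + -(w (B ω) * (az * B ω + au)) ∂μ
        = ∫ ω, (0 : ℝ) ∂μ :=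
          integral_congr_ae (Filter.Eventually.of_forall fun ω => by ring)
      _ = 0 := integral_zero _ _
  -- main computation
  calc ∫ ω, w (B ω) * (A ω - (az * B ω + au)) * Y ω ∂μ
      = ∫ ω, w (B ω) * (A ω - (az * B ω + au))
          * (ϑa (V ω) * A ω + ϑz (V ω) * B ω + ϑaz (V ω) * A ω * B ω + ϑu (V ω)) ∂μ :=
        tower_mul hm1 hfSM hfb hY houtcome
    _ = ∫ ω, w (B ω) * (1 - (az * B ω + au)) * ϑa (V ω) * A ω
          + w (B ω) * B ω * ϑz (V ω) * A ω
          + w (B ω) * B ω * (1 - (az * B ω + au)) * ϑaz (V ω) * A ω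
          + w (B ω) * ϑu (V ω) * A ω
          + -(w (B ω) * (az * B ω + au) * B ω) * ϑz (V ω)
          + -(w (B ω) * (az * B ω + au)) * ϑu (V ω) ∂μ :=
        integral_congr_ae (Filter.Eventually.of_forall fun ω => by
          rcases hA01 ω with h|h <;> simp only [h] <;> ring)
    _ = (∫ ω, w (B ω) * (1 - (az * B ω + au)) * ϑa (V ω) * A ω ∂μ)
          + (∫ ω, w (B ω) * B ω * ϑz (V ω) * A ω ∂μ)
          + (∫ ω, w (B ω) * B ω * (1 - (az * B ω + au)) * ϑaz (V ω) * A ω ∂μ)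
          + (∫ ω, w (B ω) * ϑu (V ω) * A ω ∂μ)
          + (∫ ω, -(w (B ω) * (az * B ω + au) * B ω) * ϑz (V ω) ∂μ)
          + (∫ ω, -(w (B ω) * (az * B ω + au)) * ϑu (V ω) ∂μ) :=
        integral_add6_s15 ig1 ig2 ig3 ig4 ig5 ig6
    _ = _ := by
        rw [h1, h2, h3, h4, h5, h6, o1, o2, o3, o4, o5, o6, o7, hP, hQ]
        linear_combination (∫ ω, ϑz (V ω) ∂μ) * sz + (∫ ω, ϑu (V ω) ∂μ) * su

end master2

section abar
variable {Ω 𝒱 : Type*} [instΩ : MeasurableSpace Ω] [MeasurableSpace 𝒱]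
  {μ : Measure Ω} [IsProbabilityMeasure μ]
  {V : Ω → 𝒱} {A B : Ω → ℝ}

lemma integral_add4 {g1 g2 g3 g4 : Ω → ℝ} (h1 : Integrable g1 μ) (h2 : Integrable g2 μ)
    (h3 : Integrable g3 μ) (h4 : Integrable g4 μ) :
    ∫ ω, g1 ω + g2 ω + g3 ω + g4 ω ∂μ
      = (∫ ω, g1 ω ∂μ) + (∫ ω, g2 ω ∂μ) + (∫ ω, g3 ω ∂μ) + (∫ ω, g4 ω ∂μ) := by
  calc ∫ ω, g1 ω + g2 ω + g3 ω + g4 ω ∂μ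
      = (∫ ω, g1 ω + g2 ω + g3 ω ∂μ) + ∫ ω, g4 ω ∂μ :=
        integral_add ((h1.add h2).add h3) h4
    _ = _ := by rw [integral_add3 h1 h2 h3]

lemma condexp_A_of_B (hindep : IndepFun B V μ) (hV : Measurable V) (hA : Measurable A)
    (hB : Measurable B)
    (hA01 : ∀ ω, A ω = 0 ∨ A ω = 1) (hB01 : ∀ ω, B ω = 0 ∨ B ω = 1)
    {αz αu : 𝒱 → ℝ} (hαzm : Measurable αz) (hαum : Measurable αu)
    (hαzb : ∃ C, ∀ x, |αz x| ≤ C) (hαub : ∃ C, ∀ x, |αu x| ≤ C)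
    (htreat : μ[A|MeasurableSpace.comap (fun ω => (B ω, V ω)) inferInstance]
        =ᵐ[μ] fun ω => αz (V ω) * B ω + αu (V ω))
    {az au : ℝ} (haz : ∫ ω, αz (V ω) ∂μ = az) (hau : ∫ ω, αu (V ω) ∂μ = au) :
    μ[A|MeasurableSpace.comap B inferInstance] =ᵐ[μ] fun ω => az * B ω + au := by
  have hm2 : MeasurableSpace.comap (fun ω => (B ω, V ω)) inferInstance ≤ instΩ :=
    (hB.prodMk hV).comap_le
  have hBle : MeasurableSpace.comap B inferInstance
      ≤ MeasurableSpace.comap (fun ω => (B ω, V ω)) inferInstance := by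
    rintro s ⟨t, ht, rfl⟩
    exact ⟨t ×ˢ Set.univ, ht.prod MeasurableSet.univ, by ext ω; simp⟩
  have hBsm : StronglyMeasurable[MeasurableSpace.comap B inferInstance] B :=
    (measurable_iff_comap_le.mpr le_rfl).stronglyMeasurable
  have iz : Integrable (fun ω => αz (V ω)) μ :=
    integrable_of_bdd (hαzm.comp hV) ⟨hαzb.choose, fun ω => hαzb.choose_spec (V ω)⟩
  have iu : Integrable (fun ω => αu (V ω)) μ :=
    integrable_of_bdd (hαum.comp hV) ⟨hαub.choose, fun ω => hαub.choose_spec (V ω)⟩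
  have bB : ∃ C, ∀ ω, |B ω| ≤ C := ⟨1, fun ω => by rcases hB01 ω with h|h <;> simp [h]⟩
  have izB : Integrable (fun ω => B ω * αz (V ω)) μ :=
    integrable_of_bdd (hB.mul (hαzm.comp hV))
      (bdd_mul bB ⟨hαzb.choose, fun ω => hαzb.choose_spec (V ω)⟩)
  have e_z : μ[fun ω => αz (V ω) * B ω|MeasurableSpace.comap B inferInstance]
      =ᵐ[μ] fun ω => az * B ω := by
    have c1 : μ[fun ω => αz (V ω) * B ω|MeasurableSpace.comap B inferInstance]
        =ᵐ[μ] μ[fun ω => B ω * αz (V ω)|MeasurableSpace.comap B inferInstance] :=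
      condExp_congr_ae (Filter.Eventually.of_forall fun ω => mul_comm _ _)
    have c2 : μ[fun ω => B ω * αz (V ω)|MeasurableSpace.comap B inferInstance]
        =ᵐ[μ] B * μ[fun ω => αz (V ω)|MeasurableSpace.comap B inferInstance] :=
      condExp_mul_of_stronglyMeasurable_left hBsm izB iz
    have c3 := condexp_fun_indep hindep hB hV hαzm (μ := μ)
    refine (c1.trans c2).trans ?_
    filter_upwards [c3] with ω hω
    simp only [Pi.mul_apply, hω, haz]
    ring
  have e_u : μ[fun ω => αu (V ω)|MeasurableSpace.comap B inferInstance]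
      =ᵐ[μ] fun _ => au := by
    have c3 := condexp_fun_indep hindep hB hV hαum (μ := μ)
    filter_upwards [c3] with ω hω
    rw [hω, hau]
  have iazB : Integrable (fun ω => αz (V ω) * B ω) μ :=
    integrable_of_bdd ((hαzm.comp hV).mul hB)
      (bdd_mul ⟨hαzb.choose, fun ω => hαzb.choose_spec (V ω)⟩ bB)
  have hadd : μ[fun ω => αz (V ω) * B ω + αu (V ω)|MeasurableSpace.comap B inferInstance]
      =ᵐ[μ] μ[fun ω => αz (V ω) * B ω|MeasurableSpace.comap B inferInstance]
        + μ[fun ω => αu (V ω)|MeasurableSpace.comap B inferInstance] :=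
    condExp_add iazB iu _
  have c0 : μ[A|MeasurableSpace.comap B inferInstance]
      =ᵐ[μ] μ[fun ω => αz (V ω) * B ω + αu (V ω)|MeasurableSpace.comap B inferInstance] :=
    ((condExp_condExp_of_le hBle hm2).symm).trans (condExp_congr_ae htreat)
  refine (c0.trans hadd).trans ?_
  filter_upwards [e_z, e_u] with ω h1 h2
  simp only [Pi.add_apply, h1, h2]
end abar

section row2
variable {Ω 𝒱 : Type*} [instΩ : MeasurableSpace Ω] [MeasurableSpace 𝒱]
  {μ : Measure Ω} [IsProbabilityMeasure μ]
  {V : Ω → 𝒱} {A B : Ω → ℝ}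

lemma row2 (hindep : IndepFun B V μ) (hV : Measurable V) (hA : Measurable A) (hB : Measurable B)
    (hA01 : ∀ ω, A ω = 0 ∨ A ω = 1) (hB01 : ∀ ω, B ω = 0 ∨ B ω = 1)
    {αz αu : 𝒱 → ℝ} (hαzm : Measurable αz) (hαum : Measurable αu)
    (hαzb : ∃ C, ∀ x, |αz x| ≤ C) (hαub : ∃ C, ∀ x, |αu x| ≤ C)
    (htreat : μ[A|MeasurableSpace.comap (fun ω => (B ω, V ω)) inferInstance]
        =ᵐ[μ] fun ω => αz (V ω) * B ω + αu (V ω))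
    {Y : Ω → ℝ} (hY : Integrable Y μ)
    {ϑa ϑz ϑaz ϑu : 𝒱 → ℝ}
    (hϑam : Measurable ϑa) (hϑzm : Measurable ϑz) (hϑazm : Measurable ϑaz) (hϑum : Measurable ϑu)
    (hϑab : ∃ C, ∀ x, |ϑa x| ≤ C) (hϑzb : ∃ C, ∀ x, |ϑz x| ≤ C)
    (hϑazb : ∃ C, ∀ x, |ϑaz x| ≤ C) (hϑub : ∃ C, ∀ x, |ϑu x| ≤ C)
    (houtcome : μ[Y|MeasurableSpace.comap (fun ω => (V ω, A ω, B ω)) inferInstance]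
        =ᵐ[μ] fun ω => ϑa (V ω) * A ω + ϑz (V ω) * B ω + ϑaz (V ω) * A ω * B ω + ϑu (V ω))
    {az au : ℝ} (haz : ∫ ω, αz (V ω) ∂μ = az) (hau : ∫ ω, αu (V ω) ∂μ = au)
    (o1 : ∫ ω, ϑa (V ω) * αz (V ω) ∂μ = (∫ ω, ϑa (V ω) ∂μ) * az)
    (o2 : ∫ ω, ϑa (V ω) * αu (V ω) ∂μ = (∫ ω, ϑa (V ω) ∂μ) * au)
    (o5 : ∫ ω, ϑaz (V ω) * αz (V ω) ∂μ = (∫ ω, ϑaz (V ω) ∂μ) * az)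
    (o6 : ∫ ω, ϑaz (V ω) * αu (V ω) ∂μ = (∫ ω, ϑaz (V ω) ∂μ) * au)
    {w : ℝ → ℝ} (hw : Measurable w) :
    ∫ ω, w (B ω) * Y ω ∂μ
      = (∫ ω, ϑa (V ω) ∂μ) * (az * (∫ ω, w (B ω) * B ω ∂μ) + au * (∫ ω, w (B ω) ∂μ))
        + (∫ ω, ϑz (V ω) ∂μ) * (∫ ω, w (B ω) * B ω ∂μ)
        + (∫ ω, ϑaz (V ω) ∂μ)
            * (az * (∫ ω, w (B ω) * B ω * B ω ∂μ) + au * (∫ ω, w (B ω) * B ω ∂μ))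
        + (∫ ω, ϑu (V ω) ∂μ) * (∫ ω, w (B ω) ∂μ) := by
  have hwB : Measurable (fun ω => w (B ω)) := hw.comp hB
  have bA : ∃ C, ∀ ω, |A ω| ≤ C := ⟨1, fun ω => by rcases hA01 ω with h|h <;> simp [h]⟩
  have bϑa : ∃ C, ∀ ω, |ϑa (V ω)| ≤ C := ⟨hϑab.choose, fun ω => hϑab.choose_spec (V ω)⟩
  have bϑz : ∃ C, ∀ ω, |ϑz (V ω)| ≤ C := ⟨hϑzb.choose, fun ω => hϑzb.choose_spec (V ω)⟩
  have bϑaz : ∃ C, ∀ ω, |ϑaz (V ω)| ≤ C := ⟨hϑazb.choose, fun ω => hϑazb.choose_spec (V ω)⟩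
  have bϑu : ∃ C, ∀ ω, |ϑu (V ω)| ≤ C := ⟨hϑub.choose, fun ω => hϑub.choose_spec (V ω)⟩
  have hm1 : MeasurableSpace.comap (fun ω => (V ω, A ω, B ω)) inferInstance ≤ instΩ :=
    (hV.prodMk (hA.prodMk hB)).comap_le
  have hfSM : StronglyMeasurable[MeasurableSpace.comap (fun ω => (V ω, A ω, B ω)) inferInstance]
      (fun ω => w (B ω)) :=
    ((hw.comp measurable_snd.snd).comp (measurable_iff_comap_le.mpr le_rfl)).stronglyMeasurable
  have ig1 : Integrable (fun ω => w (B ω) * ϑa (V ω) * A ω) μ :=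
    integrable_of_bdd ((hwB.mul (hϑam.comp hV)).mul hA)
      (bdd_mul (bdd_mul (bdd_comp hB01 w) bϑa) bA)
  have ig2 : Integrable (fun ω => w (B ω) * B ω * ϑz (V ω)) μ :=
    integrable_of_bdd ((hwB.mul hB).mul (hϑzm.comp hV))
      (bdd_mul (bdd_mul (bdd_comp hB01 w) (bdd_comp hB01 id)) bϑz)
  have ig3 : Integrable (fun ω => w (B ω) * B ω * ϑaz (V ω) * A ω) μ :=
    integrable_of_bdd (((hwB.mul hB).mul (hϑazm.comp hV)).mul hA)
      (bdd_mul (bdd_mul (bdd_mul (bdd_comp hB01 w) (bdd_comp hB01 id)) bϑaz) bA)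
  have ig4 : Integrable (fun ω => w (B ω) * ϑu (V ω)) μ :=
    integrable_of_bdd (hwB.mul (hϑum.comp hV)) (bdd_mul (bdd_comp hB01 w) bϑu)
  have h1 : ∫ ω, w (B ω) * ϑa (V ω) * A ω ∂μ
      = (∫ ω, ϑa (V ω) * αz (V ω) ∂μ) * (∫ ω, w (B ω) * B ω ∂μ)
        + (∫ ω, ϑa (V ω) * αu (V ω) ∂μ) * (∫ ω, w (B ω) ∂μ) :=
    red hindep hV hA hB hA01 hB01 hαzm hαum hαzb hαub htreat hw hϑam hϑab
  have h2 : ∫ ω, w (B ω) * B ω * ϑz (V ω) ∂μ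
      = (∫ ω, w (B ω) * B ω ∂μ) * ∫ ω, ϑz (V ω) ∂μ :=
    indep_fact hindep hB hV (w := fun b => w b * b) (hw.mul measurable_id) hϑzm
  have h3 : ∫ ω, w (B ω) * B ω * ϑaz (V ω) * A ω ∂μ
      = (∫ ω, ϑaz (V ω) * αz (V ω) ∂μ) * (∫ ω, w (B ω) * B ω * B ω ∂μ)
        + (∫ ω, ϑaz (V ω) * αu (V ω) ∂μ) * (∫ ω, w (B ω) * B ω ∂μ) :=
    red hindep hV hA hB hA01 hB01 hαzm hαum hαzb hαub htreat
      (hw.mul measurable_id) hϑazm hϑazb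
  have h4 : ∫ ω, w (B ω) * ϑu (V ω) ∂μ
      = (∫ ω, w (B ω) ∂μ) * ∫ ω, ϑu (V ω) ∂μ :=
    indep_fact hindep hB hV hw hϑum
  calc ∫ ω, w (B ω) * Y ω ∂μ
      = ∫ ω, w (B ω)
          * (ϑa (V ω) * A ω + ϑz (V ω) * B ω + ϑaz (V ω) * A ω * B ω + ϑu (V ω)) ∂μ :=
        tower_mul hm1 hfSM (bdd_comp hB01 w) hY houtcome
    _ = ∫ ω, w (B ω) * ϑa (V ω) * A ω + w (B ω) * B ω * ϑz (V ω)
          + w (B ω) * B ω * ϑaz (V ω) * A ω + w (B ω) * ϑu (V ω) ∂μ :=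
        integral_congr_ae (Filter.Eventually.of_forall fun ω => by ring)
    _ = (∫ ω, w (B ω) * ϑa (V ω) * A ω ∂μ) + (∫ ω, w (B ω) * B ω * ϑz (V ω) ∂μ)
          + (∫ ω, w (B ω) * B ω * ϑaz (V ω) * A ω ∂μ) + (∫ ω, w (B ω) * ϑu (V ω) ∂μ) :=
        integral_add4 ig1 ig2 ig3 ig4
    _ = _ := by rw [h1, h2, h3, h4, o1, o2, o5, o6]; ring
end row2

/-- Theorem 1 (nonparametric identification): the vector
`x* = (E[ϑ_a(V)], E[ϑ_z(V)], E[ϑ_az(V)])` satisfies the linear system `M·x = c` built from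
the three identification equations (Lemmas 4–6); consequently, if `M` is invertible, every
solution of the system equals `x*`. -/
theorem theorem1_nonparametric_identification
    {Ω 𝒱 : Type*} [MeasurableSpace Ω] [MeasurableSpace 𝒱]
    (μ : Measure Ω) [IsProbabilityMeasure μ]
    (V : Ω → 𝒱) (A B : Ω → ℝ)
    (hV : Measurable V) (hA : Measurable A) (hB : Measurable B)
    (hA01 : ∀ ω, A ω = 0 ∨ A ω = 1) (hB01 : ∀ ω, B ω = 0 ∨ B ω = 1)
    (αz αu : 𝒱 → ℝ) (hαzm : Measurable αz) (hαum : Measurable αu)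
    (hαzb : ∃ C, ∀ x, |αz x| ≤ C) (hαub : ∃ C, ∀ x, |αu x| ≤ C)
    (htreat : μ[A | MeasurableSpace.comap (fun ω => (B ω, V ω)) inferInstance]
        =ᵐ[μ] fun ω => αz (V ω) * B ω + αu (V ω))
    (hindep : IndepFun B V μ)
    (Y : Ω → ℝ) (hY : Integrable Y μ)
    (ϑa ϑz ϑaz ϑu : 𝒱 → ℝ)
    (hϑam : Measurable ϑa) (hϑzm : Measurable ϑz)
    (hϑazm : Measurable ϑaz) (hϑum : Measurable ϑu)
    (hϑab : ∃ C, ∀ x, |ϑa x| ≤ C) (hϑzb : ∃ C, ∀ x, |ϑz x| ≤ C)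
    (hϑazb : ∃ C, ∀ x, |ϑaz x| ≤ C) (hϑub : ∃ C, ∀ x, |ϑu x| ≤ C)
    (houtcome : μ[Y | MeasurableSpace.comap (fun ω => (V ω, A ω, B ω)) inferInstance]
        =ᵐ[μ] fun ω => ϑa (V ω) * A ω + ϑz (V ω) * B ω + ϑaz (V ω) * A ω * B ω + ϑu (V ω))
    (horth1 : covE μ (fun x => ϑa (V x)) (fun x => αz (V x)) = 0)
    (horth2 : covE μ (fun x => ϑa (V x)) (fun x => αu (V x)) = 0)
    (horth3 : covE μ (fun x => ϑz (V x)) (fun x => αz (V x)) = 0)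
    (horth4 : covE μ (fun x => ϑz (V x)) (fun x => αu (V x)) = 0)
    (horth5 : covE μ (fun x => ϑaz (V x)) (fun x => αz (V x)) = 0)
    (horth6 : covE μ (fun x => ϑaz (V x)) (fun x => αu (V x)) = 0)
    (horth7 : covE μ (fun x => αz (V x)) (fun x => ϑu (V x)) = 0)
    (M : Matrix (Fin 3) (Fin 3) ℝ) (c : Fin 3 → ℝ)
    (hM : M =
      !![∫ ω, (B ω - ∫ x, B x ∂μ)
            * (A ω - (μ[A | MeasurableSpace.comap B inferInstance]) ω) * A ω ∂μ,
         0,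
         ∫ ω, B ω * (B ω - ∫ x, B x ∂μ)
            * (A ω - (μ[A | MeasurableSpace.comap B inferInstance]) ω) * A ω ∂μ;
         ∫ ω, A ω * (B ω - ∫ x, B x ∂μ) ∂μ,
         ∫ ω, B ω * (B ω - ∫ x, B x ∂μ) ∂μ,
         ∫ ω, A ω * B ω * (B ω - ∫ x, B x ∂μ) ∂μ;
         covE μ (fun ω => B ω * (B ω - ∫ x, B x ∂μ))
            (fun ω => A ω * (A ω - (μ[A | MeasurableSpace.comap B inferInstance]) ω)),
         0,
         covE μ (fun ω => B ω * (B ω - ∫ x, B x ∂μ))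
            (fun ω => A ω * B ω * (A ω - (μ[A | MeasurableSpace.comap B inferInstance]) ω))])
    (hc : c =
      ![∫ ω, (B ω - ∫ x, B x ∂μ)
            * (A ω - (μ[A | MeasurableSpace.comap B inferInstance]) ω) * Y ω ∂μ,
        ∫ ω, (B ω - ∫ x, B x ∂μ) * Y ω ∂μ,
        covE μ (fun ω => B ω * (B ω - ∫ x, B x ∂μ))
            (fun ω => (A ω - (μ[A | MeasurableSpace.comap B inferInstance]) ω) * Y ω)]) :
    M.mulVec ![∫ ω, ϑa (V ω) ∂μ, ∫ ω, ϑz (V ω) ∂μ, ∫ ω, ϑaz (V ω) ∂μ] = c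
    ∧ (IsUnit M → ∀ x : Fin 3 → ℝ, M.mulVec x = c →
        x = ![∫ ω, ϑa (V ω) ∂μ, ∫ ω, ϑz (V ω) ∂μ, ∫ ω, ϑaz (V ω) ∂μ]) := by

  -- abbreviations
  have o1 : ∫ ω, ϑa (V ω) * αz (V ω) ∂μ
      = (∫ ω, ϑa (V ω) ∂μ) * ∫ ω, αz (V ω) ∂μ := by
    have h := horth1; simp only [covE] at h; linarith
  have o2 : ∫ ω, ϑa (V ω) * αu (V ω) ∂μ
      = (∫ ω, ϑa (V ω) ∂μ) * ∫ ω, αu (V ω) ∂μ := by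
    have h := horth2; simp only [covE] at h; linarith
  have o3 : ∫ ω, ϑz (V ω) * αz (V ω) ∂μ
      = (∫ ω, ϑz (V ω) ∂μ) * ∫ ω, αz (V ω) ∂μ := by
    have h := horth3; simp only [covE] at h; linarith
  have o4 : ∫ ω, ϑz (V ω) * αu (V ω) ∂μ
      = (∫ ω, ϑz (V ω) ∂μ) * ∫ ω, αu (V ω) ∂μ := by
    have h := horth4; simp only [covE] at h; linarith
  have o5 : ∫ ω, ϑaz (V ω) * αz (V ω) ∂μ
      = (∫ ω, ϑaz (V ω) ∂μ) * ∫ ω, αz (V ω) ∂μ := by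
    have h := horth5; simp only [covE] at h; linarith
  have o6 : ∫ ω, ϑaz (V ω) * αu (V ω) ∂μ
      = (∫ ω, ϑaz (V ω) ∂μ) * ∫ ω, αu (V ω) ∂μ := by
    have h := horth6; simp only [covE] at h; linarith
  have o7 : ∫ ω, ϑu (V ω) * αz (V ω) ∂μ
      = (∫ ω, ϑu (V ω) ∂μ) * ∫ ω, αz (V ω) ∂μ := by
    have h := horth7; simp only [covE] at h
    rw [show ∫ ω, ϑu (V ω) * αz (V ω) ∂μ = ∫ ω, αz (V ω) * ϑu (V ω) ∂μ from
      integral_congr_ae (Filter.Eventually.of_forall fun ω => mul_comm _ _)]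
    linarith
  have hAbar : μ[A|MeasurableSpace.comap B inferInstance]
      =ᵐ[μ] fun ω => (∫ ω', αz (V ω') ∂μ) * B ω + (∫ ω', αu (V ω') ∂μ) :=
    condexp_A_of_B hindep hV hA hB hA01 hB01 hαzm hαum hαzb hαub htreat rfl rfl
  have iB : Integrable B μ :=
    integrable_of_bdd hB ⟨1, fun ω => by rcases hB01 ω with h|h <;> simp [h]⟩
  have hBp : ∫ ω, (B ω - ∫ x, B x ∂μ) ∂μ = 0 := by
    rw [integral_sub iB (integrable_const _), integral_const]
    simp
  have hone : ∫ _ω : Ω, (1 : ℝ) ∂μ = 1 := by simp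
  -- Row 0
  have cvt00 : ∫ ω, (B ω - ∫ x, B x ∂μ)
        * (A ω - (μ[A|MeasurableSpace.comap B inferInstance]) ω) * A ω ∂μ
      = ∫ ω, (B ω - ∫ x, B x ∂μ)
        * (A ω - ((∫ ω', αz (V ω') ∂μ) * B ω + ∫ ω', αu (V ω') ∂μ)) * A ω ∂μ :=
    integral_congr_ae (by filter_upwards [hAbar] with ω h; rw [h])
  have cvt02 : ∫ ω, B ω * (B ω - ∫ x, B x ∂μ)
        * (A ω - (μ[A|MeasurableSpace.comap B inferInstance]) ω) * A ω ∂μ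
      = ∫ ω, (B ω - ∫ x, B x ∂μ)
        * (A ω - ((∫ ω', αz (V ω') ∂μ) * B ω + ∫ ω', αu (V ω') ∂μ)) * (A ω * B ω) ∂μ :=
    integral_congr_ae (by filter_upwards [hAbar] with ω h; rw [h]; ring)
  have cvt0c : ∫ ω, (B ω - ∫ x, B x ∂μ)
        * (A ω - (μ[A|MeasurableSpace.comap B inferInstance]) ω) * Y ω ∂μ
      = ∫ ω, (B ω - ∫ x, B x ∂μ)
        * (A ω - ((∫ ω', αz (V ω') ∂μ) * B ω + ∫ ω', αu (V ω') ∂μ)) * Y ω ∂μ :=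
    integral_congr_ae (by filter_upwards [hAbar] with ω h; rw [h])
  have m0 : ∫ ω, (B ω - ∫ x, B x ∂μ)
        * (A ω - ((∫ ω', αz (V ω') ∂μ) * B ω + ∫ ω', αu (V ω') ∂μ)) * Y ω ∂μ
      = (∫ ω, ϑa (V ω) ∂μ) * (∫ ω, (B ω - ∫ x, B x ∂μ)
          * (A ω - ((∫ ω', αz (V ω') ∂μ) * B ω + ∫ ω', αu (V ω') ∂μ)) * A ω ∂μ)
        + (∫ ω, ϑaz (V ω) ∂μ) * (∫ ω, (B ω - ∫ x, B x ∂μ)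
          * (A ω - ((∫ ω', αz (V ω') ∂μ) * B ω + ∫ ω', αu (V ω') ∂μ)) * (A ω * B ω) ∂μ)
        + ((∫ ω, ϑu (V ω) * αu (V ω) ∂μ) - (∫ ω, ϑu (V ω) ∂μ) * ∫ ω', αu (V ω') ∂μ)
            * (∫ ω, (B ω - ∫ x, B x ∂μ) ∂μ) :=
    master hindep hV hA hB hA01 hB01 hαzm hαum hαzb hαub htreat hY
      hϑam hϑzm hϑazm hϑum hϑab hϑzb hϑazb hϑub houtcome rfl rfl
      o1 o2 o3 o4 o5 o6 o7 (w := fun b => b - ∫ x, B x ∂μ) (measurable_id.sub_const _)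
  have R0 : (∫ ω, (B ω - ∫ x, B x ∂μ)
        * (A ω - (μ[A|MeasurableSpace.comap B inferInstance]) ω) * A ω ∂μ)
          * (∫ ω, ϑa (V ω) ∂μ)
      + (∫ ω, B ω * (B ω - ∫ x, B x ∂μ)
        * (A ω - (μ[A|MeasurableSpace.comap B inferInstance]) ω) * A ω ∂μ)
          * (∫ ω, ϑaz (V ω) ∂μ)
      = ∫ ω, (B ω - ∫ x, B x ∂μ)
        * (A ω - (μ[A|MeasurableSpace.comap B inferInstance]) ω) * Y ω ∂μ := by
    rw [cvt00, cvt02, cvt0c]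
    linear_combination (-1 : ℝ) * m0
      - ((∫ ω, ϑu (V ω) * αu (V ω) ∂μ) - (∫ ω, ϑu (V ω) ∂μ) * ∫ ω', αu (V ω') ∂μ) * hBp
  -- Row 1
  have r2i : ∫ ω, (B ω - ∫ x, B x ∂μ) * Y ω ∂μ
      = (∫ ω, ϑa (V ω) ∂μ) * ((∫ ω', αz (V ω') ∂μ) * (∫ ω, (B ω - ∫ x, B x ∂μ) * B ω ∂μ)
            + (∫ ω', αu (V ω') ∂μ) * (∫ ω, (B ω - ∫ x, B x ∂μ) ∂μ))
        + (∫ ω, ϑz (V ω) ∂μ) * (∫ ω, (B ω - ∫ x, B x ∂μ) * B ω ∂μ)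
        + (∫ ω, ϑaz (V ω) ∂μ)
            * ((∫ ω', αz (V ω') ∂μ) * (∫ ω, (B ω - ∫ x, B x ∂μ) * B ω * B ω ∂μ)
              + (∫ ω', αu (V ω') ∂μ) * (∫ ω, (B ω - ∫ x, B x ∂μ) * B ω ∂μ))
        + (∫ ω, ϑu (V ω) ∂μ) * (∫ ω, (B ω - ∫ x, B x ∂μ) ∂μ) :=
    row2 hindep hV hA hB hA01 hB01 hαzm hαum hαzb hαub htreat hY
      hϑam hϑzm hϑazm hϑum hϑab hϑzb hϑazb hϑub houtcome rfl rfl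
      o1 o2 o5 o6 (w := fun b => b - ∫ x, B x ∂μ) (measurable_id.sub_const _)
  have hJ3 : ∫ ω, (B ω - ∫ x, B x ∂μ) * B ω * B ω ∂μ
      = ∫ ω, (B ω - ∫ x, B x ∂μ) * B ω ∂μ :=
    integral_congr_ae (Filter.Eventually.of_forall fun ω => by
      rcases hB01 ω with h|h <;> simp [h])
  have hM10 : ∫ ω, A ω * (B ω - ∫ x, B x ∂μ) ∂μ
      = (∫ ω', αz (V ω') ∂μ) * (∫ ω, (B ω - ∫ x, B x ∂μ) * B ω ∂μ)
        + (∫ ω', αu (V ω') ∂μ) * (∫ ω, (B ω - ∫ x, B x ∂μ) ∂μ) := by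
    have e1 : ∫ ω, A ω * (B ω - ∫ x, B x ∂μ) ∂μ
        = ∫ ω, (B ω - ∫ x, B x ∂μ) * (1 : ℝ) * A ω ∂μ :=
      integral_congr_ae (Filter.Eventually.of_forall fun ω => by ring)
    have e2 : ∫ ω, (B ω - ∫ x, B x ∂μ) * (1 : ℝ) * A ω ∂μ
        = (∫ ω, (1 : ℝ) * αz (V ω) ∂μ) * (∫ ω, (B ω - ∫ x, B x ∂μ) * B ω ∂μ)
          + (∫ ω, (1 : ℝ) * αu (V ω) ∂μ) * (∫ ω, (B ω - ∫ x, B x ∂μ) ∂μ) :=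
      red hindep hV hA hB hA01 hB01 hαzm hαum hαzb hαub htreat
        (measurable_id.sub_const _) (q := fun _ => (1 : ℝ)) measurable_const ⟨1, by simp⟩
    rw [e1, e2]; simp only [one_mul]
  have hM11 : ∫ ω, B ω * (B ω - ∫ x, B x ∂μ) ∂μ
      = ∫ ω, (B ω - ∫ x, B x ∂μ) * B ω ∂μ :=
    integral_congr_ae (Filter.Eventually.of_forall fun ω => by ring)
  have hM12 : ∫ ω, A ω * B ω * (B ω - ∫ x, B x ∂μ) ∂μ
      = (∫ ω', αz (V ω') ∂μ) * (∫ ω, (B ω - ∫ x, B x ∂μ) * B ω ∂μ)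
        + (∫ ω', αu (V ω') ∂μ) * (∫ ω, (B ω - ∫ x, B x ∂μ) * B ω ∂μ) := by
    have e1 : ∫ ω, A ω * B ω * (B ω - ∫ x, B x ∂μ) ∂μ
        = ∫ ω, B ω * (B ω - ∫ x, B x ∂μ) * (1 : ℝ) * A ω ∂μ :=
      integral_congr_ae (Filter.Eventually.of_forall fun ω => by ring)
    have e2 : ∫ ω, B ω * (B ω - ∫ x, B x ∂μ) * (1 : ℝ) * A ω ∂μ
        = (∫ ω, (1 : ℝ) * αz (V ω) ∂μ)
            * (∫ ω, B ω * (B ω - ∫ x, B x ∂μ) * B ω ∂μ)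
          + (∫ ω, (1 : ℝ) * αu (V ω) ∂μ) * (∫ ω, B ω * (B ω - ∫ x, B x ∂μ) ∂μ) :=
      red hindep hV hA hB hA01 hB01 hαzm hαum hαzb hαub htreat
        ((measurable_id.mul (measurable_id.sub_const _)))
        (q := fun _ => (1 : ℝ)) measurable_const ⟨1, by simp⟩
    have e3 : ∫ ω, B ω * (B ω - ∫ x, B x ∂μ) * B ω ∂μ
        = ∫ ω, (B ω - ∫ x, B x ∂μ) * B ω ∂μ :=
      integral_congr_ae (Filter.Eventually.of_forall fun ω => by
        rcases hB01 ω with h|h <;> simp [h])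
    rw [e1, e2, e3, hM11]; simp only [one_mul]
  have R1 : (∫ ω, A ω * (B ω - ∫ x, B x ∂μ) ∂μ) * (∫ ω, ϑa (V ω) ∂μ)
      + (∫ ω, B ω * (B ω - ∫ x, B x ∂μ) ∂μ) * (∫ ω, ϑz (V ω) ∂μ)
      + (∫ ω, A ω * B ω * (B ω - ∫ x, B x ∂μ) ∂μ) * (∫ ω, ϑaz (V ω) ∂μ)
      = ∫ ω, (B ω - ∫ x, B x ∂μ) * Y ω ∂μ := by
    rw [hM10, hM11, hM12]
    linear_combination (-1 : ℝ) * r2i - (∫ ω, ϑaz (V ω) ∂μ) * (∫ ω', αz (V ω') ∂μ) * hJ3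
      - ((∫ ω, ϑu (V ω) ∂μ)) * hBp
  -- Row 2
  have mk : ∀ (hAb : μ[A|MeasurableSpace.comap B inferInstance]
      =ᵐ[μ] fun ω => (∫ ω', αz (V ω') ∂μ) * B ω + (∫ ω', αu (V ω') ∂μ)), True := fun _ => trivial
  have d1 : ∫ ω, (B ω * (B ω - ∫ x, B x ∂μ))
        * (A ω * (A ω - (μ[A|MeasurableSpace.comap B inferInstance]) ω)) ∂μ
      = ∫ ω, B ω * (B ω - ∫ x, B x ∂μ)
        * (A ω - ((∫ ω', αz (V ω') ∂μ) * B ω + ∫ ω', αu (V ω') ∂μ)) * A ω ∂μ :=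
    integral_congr_ae (by filter_upwards [hAbar] with ω h; rw [h]; ring)
  have d2 : ∫ ω, A ω * (A ω - (μ[A|MeasurableSpace.comap B inferInstance]) ω) ∂μ
      = ∫ ω, (1 : ℝ)
        * (A ω - ((∫ ω', αz (V ω') ∂μ) * B ω + ∫ ω', αu (V ω') ∂μ)) * A ω ∂μ :=
    integral_congr_ae (by filter_upwards [hAbar] with ω h; rw [h]; ring)
  have d3 : ∫ ω, (B ω * (B ω - ∫ x, B x ∂μ))
        * (A ω * B ω * (A ω - (μ[A|MeasurableSpace.comap B inferInstance]) ω)) ∂μ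
      = ∫ ω, B ω * (B ω - ∫ x, B x ∂μ)
        * (A ω - ((∫ ω', αz (V ω') ∂μ) * B ω + ∫ ω', αu (V ω') ∂μ)) * (A ω * B ω) ∂μ :=
    integral_congr_ae (by filter_upwards [hAbar] with ω h; rw [h]; ring)
  have d4 : ∫ ω, A ω * B ω * (A ω - (μ[A|MeasurableSpace.comap B inferInstance]) ω) ∂μ
      = ∫ ω, (1 : ℝ)
        * (A ω - ((∫ ω', αz (V ω') ∂μ) * B ω + ∫ ω', αu (V ω') ∂μ)) * (A ω * B ω) ∂μ :=
    integral_congr_ae (by filter_upwards [hAbar] with ω h; rw [h]; ring)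
  have d5 : ∫ ω, (B ω * (B ω - ∫ x, B x ∂μ))
        * ((A ω - (μ[A|MeasurableSpace.comap B inferInstance]) ω) * Y ω) ∂μ
      = ∫ ω, B ω * (B ω - ∫ x, B x ∂μ)
        * (A ω - ((∫ ω', αz (V ω') ∂μ) * B ω + ∫ ω', αu (V ω') ∂μ)) * Y ω ∂μ :=
    integral_congr_ae (by filter_upwards [hAbar] with ω h; rw [h]; ring)
  have d6 : ∫ ω, (A ω - (μ[A|MeasurableSpace.comap B inferInstance]) ω) * Y ω ∂μ
      = ∫ ω, (1 : ℝ)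
        * (A ω - ((∫ ω', αz (V ω') ∂μ) * B ω + ∫ ω', αu (V ω') ∂μ)) * Y ω ∂μ :=
    integral_congr_ae (by filter_upwards [hAbar] with ω h; rw [h]; ring)
  have mg : ∫ ω, B ω * (B ω - ∫ x, B x ∂μ)
        * (A ω - ((∫ ω', αz (V ω') ∂μ) * B ω + ∫ ω', αu (V ω') ∂μ)) * Y ω ∂μ
      = (∫ ω, ϑa (V ω) ∂μ) * (∫ ω, B ω * (B ω - ∫ x, B x ∂μ)
          * (A ω - ((∫ ω', αz (V ω') ∂μ) * B ω + ∫ ω', αu (V ω') ∂μ)) * A ω ∂μ)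
        + (∫ ω, ϑaz (V ω) ∂μ) * (∫ ω, B ω * (B ω - ∫ x, B x ∂μ)
          * (A ω - ((∫ ω', αz (V ω') ∂μ) * B ω + ∫ ω', αu (V ω') ∂μ)) * (A ω * B ω) ∂μ)
        + ((∫ ω, ϑu (V ω) * αu (V ω) ∂μ) - (∫ ω, ϑu (V ω) ∂μ) * ∫ ω', αu (V ω') ∂μ)
            * (∫ ω, B ω * (B ω - ∫ x, B x ∂μ) ∂μ) :=
    master hindep hV hA hB hA01 hB01 hαzm hαum hαzb hαub htreat hY
      hϑam hϑzm hϑazm hϑum hϑab hϑzb hϑazb hϑub houtcome rfl rfl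
      o1 o2 o3 o4 o5 o6 o7 (w := fun b => b * (b - ∫ x, B x ∂μ))
      (measurable_id.mul (measurable_id.sub_const _))
  have m1 : ∫ ω, (1 : ℝ)
        * (A ω - ((∫ ω', αz (V ω') ∂μ) * B ω + ∫ ω', αu (V ω') ∂μ)) * Y ω ∂μ
      = (∫ ω, ϑa (V ω) ∂μ) * (∫ ω, (1 : ℝ)
          * (A ω - ((∫ ω', αz (V ω') ∂μ) * B ω + ∫ ω', αu (V ω') ∂μ)) * A ω ∂μ)
        + (∫ ω, ϑaz (V ω) ∂μ) * (∫ ω, (1 : ℝ)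
          * (A ω - ((∫ ω', αz (V ω') ∂μ) * B ω + ∫ ω', αu (V ω') ∂μ)) * (A ω * B ω) ∂μ)
        + ((∫ ω, ϑu (V ω) * αu (V ω) ∂μ) - (∫ ω, ϑu (V ω) ∂μ) * ∫ ω', αu (V ω') ∂μ)
            * (∫ _ω, (1 : ℝ) ∂μ) :=
    master hindep hV hA hB hA01 hB01 hαzm hαum hαzb hαub htreat hY
      hϑam hϑzm hϑazm hϑum hϑab hϑzb hϑazb hϑub houtcome rfl rfl
      o1 o2 o3 o4 o5 o6 o7 (w := fun _ => (1 : ℝ)) measurable_const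
  have R2 : covE μ (fun ω => B ω * (B ω - ∫ x, B x ∂μ))
        (fun ω => A ω * (A ω - (μ[A|MeasurableSpace.comap B inferInstance]) ω))
          * (∫ ω, ϑa (V ω) ∂μ)
      + covE μ (fun ω => B ω * (B ω - ∫ x, B x ∂μ))
        (fun ω => A ω * B ω * (A ω - (μ[A|MeasurableSpace.comap B inferInstance]) ω))
          * (∫ ω, ϑaz (V ω) ∂μ)
      = covE μ (fun ω => B ω * (B ω - ∫ x, B x ∂μ))
        (fun ω => (A ω - (μ[A|MeasurableSpace.comap B inferInstance]) ω) * Y ω) := by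
    simp only [covE]
    rw [d1, d2, d3, d4, d5, d6]
    linear_combination (-1 : ℝ) * mg + (∫ ω, B ω * (B ω - ∫ x, B x ∂μ) ∂μ) * m1
      + ((∫ ω, ϑu (V ω) * αu (V ω) ∂μ) - (∫ ω, ϑu (V ω) ∂μ) * ∫ ω', αu (V ω') ∂μ)
        * (∫ ω, B ω * (B ω - ∫ x, B x ∂μ) ∂μ) * hone
  -- assemble
  have hmain : M.mulVec ![∫ ω, ϑa (V ω) ∂μ, ∫ ω, ϑz (V ω) ∂μ, ∫ ω, ϑaz (V ω) ∂μ] = c := by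
    rw [hM, hc]
    funext i
    fin_cases i <;>
      simp [Matrix.mulVec, dotProduct, Fin.sum_univ_three]
    · linear_combination R0
    · linear_combination R1
    · linear_combination R2
  refine ⟨hmain, fun hMu x hx => ?_⟩
  obtain ⟨u, hu⟩ := hMu
  have hN : (↑u⁻¹ : Matrix (Fin 3) (Fin 3) ℝ) * M = 1 := by rw [← hu]; exact u.inv_mul
  calc x = (1 : Matrix (Fin 3) (Fin 3) ℝ).mulVec x := by simp
    _ = (↑u⁻¹ : Matrix (Fin 3) (Fin 3) ℝ).mulVec (M.mulVec x) := by
        rw [Matrix.mulVec_mulVec, hN]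
    _ = (↑u⁻¹ : Matrix (Fin 3) (Fin 3) ℝ).mulVec
          (M.mulVec ![∫ ω, ϑa (V ω) ∂μ, ∫ ω, ϑz (V ω) ∂μ, ∫ ω, ϑaz (V ω) ∂μ]) := by
        rw [hx, hmain]
    _ = (1 : Matrix (Fin 3) (Fin 3) ℝ).mulVec
          ![∫ ω, ϑa (V ω) ∂μ, ∫ ω, ϑz (V ω) ∂μ, ∫ ω, ϑaz (V ω) ∂μ] := by
        rw [Matrix.mulVec_mulVec, hN]
    _ = _ := by simp
end
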